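/- arXiv:1309.3896 — 5 statements merged into one kernel-verified Lean document; each statement's English description precedes it below -/
import Mathlib

section
/- Let K ⊂ ℝ² be the attractor of a rotation- and reflection-free iterated function system {ψ_1,…,ψ_q}, ψ_j(x) = ρ_j x + w_j, satisfying the strong separation condition. If for almost every t ∈ π(K) every cylinder set ψ_{ω₁}∘⋯∘ψ_{ω_m}(K) containing a point of π⁻¹{t} has slice of infinite (s−1)-dimensional packing premeasure (i.e. P^{s−1}((ψ_ω(K))_t) = ∞ for all relevant finite words ω), then 𝒫^{s−1}(K_t) = ∞ for almost every t ∈ π(K). In particular, if P^{s−1}(K_t) = ∞ for a.e. t ∈ π(K), then by self-similarity 𝒫^{s−1}(K_t) = ∞ for a.e. t ∈ π(K). -/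
open MeasureTheory Metric Set
open scoped ENNReal
open scoped Topology

/-- The δ-approximate s-dimensional packing premeasure: the supremum of `∑ (diam Bᵢ)^s`
over finite disjoint collections of closed balls of diameter at most δ centred in `A`. -/
noncomputable def prepack {X : Type*} [PseudoMetricSpace X] (s δ : ℝ) (A : Set X) : ℝ≥0∞ :=
  ⨆ (n : ℕ) (c : Fin n → X) (r : Fin n → ℝ)
    (_ : ∀ i, c i ∈ A ∧ 0 < r i ∧ 2 * r i ≤ δ)
    (_ : Pairwise fun i j => Disjoint (closedBall (c i) (r i)) (closedBall (c j) (r j))),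
    ∑ i, ENNReal.ofReal ((2 * r i) ^ s)

/-- The s-dimensional packing premeasure `P^s(A) = lim_{δ → 0} P^s_δ(A)`. -/
noncomputable def packPre {X : Type*} [PseudoMetricSpace X] (s : ℝ) (A : Set X) : ℝ≥0∞ :=
  ⨅ (δ : ℝ) (_ : 0 < δ), prepack s δ A

/-- The s-dimensional packing measure `𝒫^s(A) = inf { ∑ P^s(Aᵢ) : A ⊆ ⋃ Aᵢ }`. -/
noncomputable def packMeasure {X : Type*} [PseudoMetricSpace X] (s : ℝ) (A : Set X) : ℝ≥0∞ :=
  ⨅ (f : ℕ → Set X) (_ : A ⊆ ⋃ n, f n), ∑' n, packPre s (f n)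

/-- The packing dimension. -/
noncomputable def packDim {X : Type*} [PseudoMetricSpace X] (A : Set X) : ℝ :=
  sInf {s : ℝ | 0 ≤ s ∧ packMeasure s A = 0}

/-- The composition `ψ_{ω₁} ∘ ⋯ ∘ ψ_{ω_n}` associated to a finite word ω. -/
def wordMap {q : ℕ} {X : Type*} (ψ : Fin q → X → X) (ω : List (Fin q)) : X → X :=
  ω.foldr (fun j f => ψ j ∘ f) id

/-- The contraction ratio `ρ_{ω₁} ⋯ ρ_{ω_n}` associated to a finite word ω. -/
def wordRatio {q : ℕ} (ρ : Fin q → ℝ) (ω : List (Fin q)) : ℝ := (ω.map ρ).prod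

lemma prepack_mono {X : Type*} [PseudoMetricSpace X] (s δ : ℝ) {A B : Set X} (h : A ⊆ B) :
    prepack s δ A ≤ prepack s δ B := by
  refine iSup_le fun n => iSup_le fun c => iSup_le fun r => iSup_le fun h1 => iSup_le fun h2 => ?_
  exact le_iSup_of_le n (le_iSup_of_le c (le_iSup_of_le r
    (le_iSup_of_le (fun i => ⟨h (h1 i).1, (h1 i).2⟩) (le_iSup_of_le h2 le_rfl))))

lemma prepack_closure_le {X : Type*} [PseudoMetricSpace X] (s δ : ℝ) (A : Set X) :
    prepack s δ (closure A) ≤ prepack s δ A := by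
  refine iSup_le fun n => iSup_le fun c => iSup_le fun r => iSup_le fun h1 => iSup_le fun hd => ?_
  rcases Nat.eq_zero_or_pos n with rfl | hn
  · simp
  haveI : Nonempty (Fin n) := Fin.pos_iff_nonempty.mp hn
  set η₀ : ℝ := Finset.univ.inf' Finset.univ_nonempty r with hη₀
  have hη₀pos : 0 < η₀ := (Finset.lt_inf'_iff _).mpr fun i _ => (h1 i).2.1
  have key : ∀ η ∈ Ioo (0:ℝ) η₀,
      (∑ i, ENNReal.ofReal ((2 * (r i - η)) ^ s)) ≤ prepack s δ A := by
    intro η hη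
    choose c' hc'A hc'd using fun i => Metric.mem_closure_iff.mp (h1 i).1 η hη.1
    have hrη : ∀ i, η < r i := fun i =>
      lt_of_lt_of_le hη.2 (Finset.inf'_le _ (Finset.mem_univ i))
    refine le_iSup_of_le n (le_iSup_of_le c' (le_iSup_of_le (fun i => r i - η)
      (le_iSup_of_le ?_ (le_iSup_of_le ?_ le_rfl))))
    · intro i
      refine ⟨hc'A i, sub_pos.mpr (hrη i), ?_⟩
      show 2 * (r i - η) ≤ δ
      have := (h1 i).2.2
      linarith [hη.1.le]
    · intro i j hij
      have hsub : ∀ k, closedBall (c' k) (r k - η) ⊆ closedBall (c k) (r k) := fun k =>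
        Metric.closedBall_subset_closedBall' (by linarith [hc'd k, dist_comm (c' k) (c k)])
      exact (hd hij).mono (hsub i) (hsub j)
  have F0 : Filter.Tendsto (fun η : ℝ => ∑ i, ENNReal.ofReal ((2 * (r i - η)) ^ s))
      (nhdsWithin 0 (Ioi 0)) (𝓝 (∑ i, ENNReal.ofReal ((2 * r i) ^ s))) := by
    have hc : ∀ i : Fin n,
        ContinuousAt (fun η : ℝ => ENNReal.ofReal ((2 * (r i - η)) ^ s)) 0 := by
      intro i
      have hbase : ContinuousAt (fun η : ℝ => 2 * (r i - η)) 0 := by fun_prop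
      have hne : (2 * (r i - (0:ℝ))) ≠ 0 := by have := (h1 i).2.1; simp; linarith
      have h2 : ContinuousAt (fun x : ℝ => x ^ s) (2 * (r i - (0:ℝ))) :=
        Real.continuousAt_rpow_const _ _ (Or.inl hne)
      have h3 : ContinuousAt (fun η : ℝ => (2 * (r i - η)) ^ s) 0 := ContinuousAt.comp (f := fun η : ℝ => 2 * (r i - η)) h2 hbase
      exact ENNReal.continuous_ofReal.continuousAt.comp h3
    have h4 : Filter.Tendsto (fun η : ℝ => ∑ i, ENNReal.ofReal ((2 * (r i - η)) ^ s))
        (𝓝 0) (𝓝 (∑ i, ENNReal.ofReal ((2 * (r i - (0:ℝ))) ^ s))) :=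
      tendsto_finset_sum Finset.univ (fun i _ => (hc i).tendsto)
    have h5 := h4.mono_left (nhdsWithin_le_nhds (s := Ioi (0:ℝ)))
    simpa using h5
  refine le_of_tendsto F0 ?_
  filter_upwards [Ioo_mem_nhdsGT_of_mem ⟨le_refl (0:ℝ), hη₀pos⟩] with η hη using key η hη

lemma packPre_mono {X : Type*} [PseudoMetricSpace X] (s : ℝ) {A B : Set X} (h : A ⊆ B) :
    packPre s A ≤ packPre s B :=
  iInf_mono fun δ => iInf_mono fun _ => prepack_mono s δ h

lemma packPre_closure_le {X : Type*} [PseudoMetricSpace X] (s : ℝ) (A : Set X) :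
    packPre s (closure A) ≤ packPre s A :=
  iInf_mono fun δ => iInf_mono fun _ => prepack_closure_le s δ A

/-- (Reduction from packing measure to packing premeasure for slices of a
rotation- and reflection-free self-similar set with strong separation.) If for a.e.
`t ∈ π(K)` every cylinder `ψ_ω(K)` meeting the fiber `π⁻¹{t}` has a slice of infinite
`(s-1)`-dimensional packing premeasure, then `𝒫^{s-1}(K_t) = ∞` for a.e. `t ∈ π(K)`. -/
theorem packMeasure_slices_infinite_of_prepack (q : ℕ) (ρ : Fin q → ℝ) (w : Fin q → ℝ × ℝ)
    (hρ : ∀ j, ρ j ∈ Set.Ioo (0:ℝ) 1)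
    (ψ : Fin q → (ℝ × ℝ) → (ℝ × ℝ)) (hψ : ∀ j x, ψ j x = ρ j • x + w j)
    (K : Set (ℝ × ℝ)) (hKc : IsCompact K) (hKne : K.Nonempty)
    (hinv : K = ⋃ j, ψ j '' K)
    (hsep : Pairwise fun i j => Disjoint (ψ i '' K) (ψ j '' K))
    (s : ℝ)
    (hyp : ∀ᵐ t ∂(volume.restrict (Prod.fst '' K)), ∀ ω : List (Fin q),
      ((wordMap ψ ω '' K) ∩ Prod.fst ⁻¹' {t}).Nonempty →
      packPre (s - 1) ((wordMap ψ ω '' K) ∩ Prod.fst ⁻¹' {t}) = ∞) :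
    ∀ᵐ t ∂(volume.restrict (Prod.fst '' K)),
      packMeasure (s - 1) (K ∩ Prod.fst ⁻¹' {t}) = ∞ := by
  have hKcM : MeasurableSet (Prod.fst '' K) := (hKc.image continuous_fst).measurableSet
  obtain ⟨x0, hx0⟩ := hKne
  have hx0' : x0 ∈ ⋃ j, ψ j '' K := hinv ▸ hx0
  obtain ⟨j0, -⟩ := mem_iUnion.mp hx0'
  haveI : Nonempty (Fin q) := ⟨j0⟩
  set rmax : ℝ := Finset.univ.sup' Finset.univ_nonempty ρ with hrmax
  have hrpos : 0 < rmax := lt_of_lt_of_le (hρ j0).1 (Finset.le_sup' _ (Finset.mem_univ j0))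
  have hrlt1 : rmax < 1 := (Finset.sup'_lt_iff _).mpr fun j _ => (hρ j).2
  have hdist : ∀ j a b, dist (ψ j a) (ψ j b) = ρ j * dist a b := by
    intro j a b
    simp only [hψ, dist_eq_norm]
    rw [add_sub_add_right_eq_sub, ← smul_sub, norm_smul, Real.norm_eq_abs,
      abs_of_pos (hρ j).1]
  have hWdist : ∀ ω : List (Fin q), ∀ a b, dist (wordMap ψ ω a) (wordMap ψ ω b)
      = wordRatio ρ ω * dist a b := by
    intro ω
    induction ω with
    | nil => intro a b; simp [wordMap, wordRatio]
    | cons j ω ih =>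
      intro a b
      rw [show wordMap ψ (j :: ω) a = ψ j (wordMap ψ ω a) from rfl,
        show wordMap ψ (j :: ω) b = ψ j (wordMap ψ ω b) from rfl, hdist, ih]
      simp only [wordRatio, List.map_cons, List.prod_cons]
      ring
  have hWr : ∀ ω : List (Fin q), 0 ≤ wordRatio ρ ω ∧ wordRatio ρ ω ≤ rmax ^ ω.length := by
    intro ω
    induction ω with
    | nil => simp [wordRatio]
    | cons j ω ih =>
      have hj : ρ j ≤ rmax := Finset.le_sup' _ (Finset.mem_univ j)
      have hcons : wordRatio ρ (j :: ω) = ρ j * wordRatio ρ ω := by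
        simp only [wordRatio, List.map_cons, List.prod_cons]
      constructor
      · rw [hcons]; exact mul_nonneg (hρ j).1.le ih.1
      · rw [hcons, List.length_cons, pow_succ]
        calc ρ j * wordRatio ρ ω ≤ rmax * rmax ^ ω.length :=
              mul_le_mul hj ih.2 ih.1 hrpos.le
          _ = rmax ^ ω.length * rmax := mul_comm _ _
  have hmem : ∀ m : ℕ, ∀ x ∈ K, ∃ ω : List (Fin q), ω.length = m ∧ x ∈ wordMap ψ ω '' K := by
    intro m
    induction m with
    | zero => exact fun x hx => ⟨[], rfl, ⟨x, hx, rfl⟩⟩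
    | succ m ih =>
      intro x hx
      have hx' : x ∈ ⋃ j, ψ j '' K := hinv ▸ hx
      obtain ⟨j, y, hy, rfl⟩ := mem_iUnion.mp hx'
      obtain ⟨ω, hlen, z, hz, rfl⟩ := ih y hy
      exact ⟨j :: ω, by simp [hlen], ⟨z, hz, rfl⟩⟩
  have hsubK : ∀ ω : List (Fin q), wordMap ψ ω '' K ⊆ K := by
    intro ω
    induction ω with
    | nil => intro x hx; simpa [wordMap] using hx
    | cons j ω ih =>
      rintro x ⟨y, hy, rfl⟩
      have h1 : wordMap ψ ω y ∈ K := ih ⟨y, hy, rfl⟩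
      have h2 : ψ j (wordMap ψ ω y) ∈ ⋃ i, ψ i '' K := mem_iUnion.mpr ⟨j, _, h1, rfl⟩
      rw [← hinv] at h2
      exact h2
  have hcyl : ∀ x ∈ K, ∀ ε : ℝ, 0 < ε → ∃ ω : List (Fin q),
      x ∈ wordMap ψ ω '' K ∧ ∀ y ∈ wordMap ψ ω '' K, dist y x < ε := by
    intro x hx ε hε
    have htend : Filter.Tendsto (fun m : ℕ => rmax ^ m * Metric.diam K)
        Filter.atTop (𝓝 0) := by
      have h0 := tendsto_pow_atTop_nhds_zero_of_lt_one hrpos.le hrlt1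
      simpa using h0.mul_const (Metric.diam K)
    obtain ⟨m, hm⟩ := (htend.eventually_lt_const hε).exists
    obtain ⟨ω, hlen, hxω⟩ := hmem m x hx
    refine ⟨ω, hxω, ?_⟩
    rintro y ⟨a, ha, rfl⟩
    obtain ⟨b, hb, hxb⟩ := hxω
    calc dist (wordMap ψ ω a) x = wordRatio ρ ω * dist a b := by rw [← hxb, hWdist]
      _ ≤ rmax ^ m * Metric.diam K := by
          refine mul_le_mul ?_ (Metric.dist_le_diam_of_mem hKc.isBounded ha hb)
            dist_nonneg (pow_nonneg hrpos.le m)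
          rw [← hlen]; exact (hWr ω).2
      _ < ε := hm
  filter_upwards [hyp, ae_restrict_mem hKcM] with t hyp_t ht
  obtain ⟨p, hpK, hpt⟩ := ht
  set T := K ∩ Prod.fst ⁻¹' {t} with hTdef
  have hTc : IsCompact T := hKc.inter_right (isClosed_singleton.preimage continuous_fst)
  have hpT : p ∈ T := ⟨hpK, by simp [hpt]⟩
  by_contra hcon
  have hlt : packMeasure (s-1) T < ∞ := lt_top_iff_ne_top.mpr hcon
  rw [packMeasure, iInf_lt_iff] at hlt
  obtain ⟨f, hlt⟩ := hlt
  rw [iInf_lt_iff] at hlt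
  obtain ⟨hcov, hsum⟩ := hlt
  haveI : CompactSpace ↥T := isCompact_iff_compactSpace.mp hTc
  haveI : Nonempty ↥T := ⟨⟨p, hpT⟩⟩
  have hclosed : ∀ n : ℕ, IsClosed ((Subtype.val ⁻¹' closure (f n)) : Set ↥T) :=
    fun n => isClosed_closure.preimage continuous_subtype_val
  have hunion : ⋃ n, (Subtype.val ⁻¹' closure (f n) : Set ↥T) = univ := by
    ext x
    simp only [mem_iUnion, mem_univ, iff_true, mem_preimage]
    obtain ⟨n, hn⟩ := mem_iUnion.mp (hcov x.2)
    exact ⟨n, subset_closure hn⟩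
  obtain ⟨n, xx, hxx⟩ := nonempty_interior_of_iUnion_of_closed hclosed hunion
  obtain ⟨ε, hε, hball⟩ := Metric.mem_nhds_iff.mp (mem_interior_iff_mem_nhds.mp hxx)
  have hxK : (xx : ℝ × ℝ) ∈ K := xx.2.1
  obtain ⟨ω, hxω, hωsmall⟩ := hcyl _ hxK ε hε
  set C := wordMap ψ ω '' K ∩ Prod.fst ⁻¹' {t} with hCdef
  have hxt : ((xx : ℝ × ℝ)) ∈ Prod.fst ⁻¹' ({t} : Set ℝ) := xx.2.2
  have hxC : (xx : ℝ × ℝ) ∈ C := ⟨hxω, hxt⟩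
  have hCinf : packPre (s-1) C = ∞ := hyp_t ω ⟨_, hxC⟩
  have hCsub : C ⊆ closure (f n) := by
    rintro y ⟨hy1, hy2⟩
    have hyT : y ∈ T := ⟨hsubK ω hy1, hy2⟩
    have hmemball : (⟨y, hyT⟩ : ↥T) ∈ ball xx ε := by
      rw [mem_ball, Subtype.dist_eq]
      exact hωsmall y hy1
    exact hball hmemball
  have hfn : packPre (s-1) (f n) = ∞ := by
    have h1 : packPre (s-1) C ≤ packPre (s-1) (f n) :=
      le_trans (packPre_mono _ hCsub) (packPre_closure_le _ _)
    rw [hCinf] at h1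
    exact top_le_iff.mp h1
  have hge : (⊤ : ℝ≥0∞) ≤ ∑' n, packPre (s-1) (f n) := hfn ▸ ENNReal.le_tsum n
  exact absurd (lt_of_le_of_lt hge hsum) (lt_irrefl _)
end

section
/- Let K ⊂ ℝ² be a rotation- and reflection-free self-similar set with π(K) ⊂ [0,1], min π(K) = 0, and suppose the vertical line π⁻¹{0} meets only one of the first-generation sets ψ_j(K), say ψ_l(K). Then there exists κ > 0 such that for every k ≥ 1, the strip π⁻¹[0, ρ_l^{k−1} κ] intersects exactly one generation-k cylinder, namely K_{l^k} = ψ_l^{∘k}(K). -/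
open MeasureTheory Metric Set
open scoped ENNReal

/-- The first coordinate of the translation associated to a word. -/
def offW {q : ℕ} (ρ : Fin q → ℝ) (w : Fin q → ℝ × ℝ) (ω : List (Fin q)) : ℝ :=
  ω.foldr (fun j t => ρ j * t + (w j).1) 0

lemma wordMap_cons {q : ℕ} {X : Type*} (ψ : Fin q → X → X) (j : Fin q) (ω : List (Fin q))
    (x : X) : wordMap ψ (j :: ω) x = ψ j (wordMap ψ ω x) := rfl

lemma wordRatio_cons {q : ℕ} (ρ : Fin q → ℝ) (j : Fin q) (ω : List (Fin q)) :
    wordRatio ρ (j :: ω) = ρ j * wordRatio ρ ω := by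
  simp [wordRatio]

lemma offW_cons {q : ℕ} (ρ : Fin q → ℝ) (w : Fin q → ℝ × ℝ) (j : Fin q) (ω : List (Fin q)) :
    offW ρ w (j :: ω) = ρ j * offW ρ w ω + (w j).1 := rfl

lemma wordRatio_pos {q : ℕ} (ρ : Fin q → ℝ) (hρ : ∀ j, ρ j ∈ Set.Ioo (0:ℝ) 1)
    (ω : List (Fin q)) : 0 < wordRatio ρ ω := by
  induction ω with
  | nil => simp [wordRatio]
  | cons j ω ih => rw [wordRatio_cons]; exact mul_pos (hρ j).1 ih

lemma fst_wordMap {q : ℕ} (ρ : Fin q → ℝ) (w : Fin q → ℝ × ℝ)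
    (ψ : Fin q → (ℝ × ℝ) → (ℝ × ℝ)) (hψ : ∀ j x, ψ j x = ρ j • x + w j)
    (ω : List (Fin q)) (x : ℝ × ℝ) :
    (wordMap ψ ω x).1 = wordRatio ρ ω * x.1 + offW ρ w ω := by
  induction ω with
  | nil => simp [wordMap, wordRatio, offW]
  | cons j ω ih =>
      rw [wordMap_cons, wordRatio_cons, offW_cons, hψ]
      simp only [Prod.fst_add, Prod.smul_fst, smul_eq_mul, ih]
      ring

lemma offW_replicate_append {q : ℕ} (ρ : Fin q → ℝ) (w : Fin q → ℝ × ℝ) (l : Fin q)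
    (hwl : (w l).1 = 0) (m : ℕ) (ω : List (Fin q)) :
    offW ρ w (List.replicate m l ++ ω) = ρ l ^ m * offW ρ w ω := by
  induction m with
  | zero => simp
  | succ m ih =>
      rw [List.replicate_succ, List.cons_append, offW_cons, ih, hwl, pow_succ]
      ring

lemma word_decomp {q : ℕ} (l : Fin q) :
    ∀ ω : List (Fin q), ω ≠ List.replicate ω.length l →
      ∃ m j ω', j ≠ l ∧ ω = List.replicate m l ++ j :: ω' := by
  intro ω
  induction ω with
  | nil => intro h; exact absurd rfl h
  | cons j ω ih =>
      intro h
      by_cases hj : j = l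
      · subst hj
        have hω : ω ≠ List.replicate ω.length j := by
          intro hc
          apply h
          simp [List.length_cons, List.replicate_succ, ← hc]
        obtain ⟨m, j', ω', hj', hdec⟩ := ih hω
        exact ⟨m + 1, j', ω', hj', by simp [List.replicate_succ, hdec]⟩
      · exact ⟨0, j, ω, hj, by simp⟩

/-- If the fiber over `min π(K) = 0` meets only the first-generation piece
`ψ_l(K)`, then there is `κ > 0` such that for every `k ≥ 1` the strip
`π⁻¹[0, ρ_l^{k-1}κ]` intersects exactly one generation-`k` cylinder, namely `K_{l^k}`. -/
theorem strip_meets_unique_cylinder (q : ℕ) (ρ : Fin q → ℝ) (w : Fin q → ℝ × ℝ)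
    (hρ : ∀ j, ρ j ∈ Set.Ioo (0:ℝ) 1)
    (ψ : Fin q → (ℝ × ℝ) → (ℝ × ℝ)) (hψ : ∀ j x, ψ j x = ρ j • x + w j)
    (K : Set (ℝ × ℝ)) (hKc : IsCompact K) (hKne : K.Nonempty)
    (hinv : K = ⋃ j, ψ j '' K)
    (hsep : Pairwise fun i j => Disjoint (ψ i '' K) (ψ j '' K))
    (hπK : Prod.fst '' K ⊆ Set.Icc (0:ℝ) 1)
    (hmin : IsLeast (Prod.fst '' K) 0)
    (l : Fin q)
    (hl : ((ψ l '' K) ∩ Prod.fst ⁻¹' {(0:ℝ)}).Nonempty)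
    (hl' : ∀ j, ((ψ j '' K) ∩ Prod.fst ⁻¹' {(0:ℝ)}).Nonempty → j = l) :
    ∃ κ > (0:ℝ), ∀ k : ℕ, 1 ≤ k → ∀ ω : List (Fin q), ω.length = k →
      (((wordMap ψ ω '' K) ∩ Prod.fst ⁻¹' Set.Icc 0 (ρ l ^ (k - 1) * κ)).Nonempty ↔
        ω = List.replicate k l) := by
  classical
  obtain ⟨x₀, hx₀K, hx₀⟩ := hmin.1
  have hK0 : ∀ x ∈ K, (0:ℝ) ≤ x.1 := fun x hx => hmin.2 ⟨x, hx, rfl⟩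
  have hsub : ∀ j, ψ j '' K ⊆ K := by
    intro j
    have h := Set.subset_iUnion (fun j => ψ j '' K) j
    rwa [← hinv] at h
  have hfstψ : ∀ j (x : ℝ × ℝ), (ψ j x).1 = ρ j * x.1 + (w j).1 := by
    intro j x; rw [hψ]; simp
  have hwj0 : ∀ j, (0:ℝ) ≤ (w j).1 := by
    intro j
    have h1 := hK0 _ (hsub j ⟨x₀, hx₀K, rfl⟩)
    rwa [hfstψ, hx₀, mul_zero, zero_add] at h1
  have hwl : (w l).1 = 0 := by
    obtain ⟨p, ⟨y, hyK, hyp⟩, hp0⟩ := hl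
    have : ρ l * y.1 + (w l).1 = 0 := by
      rw [← hfstψ, hyp]; exact hp0
    have hy1 : 0 ≤ ρ l * y.1 := mul_nonneg (hρ l).1.le (hK0 y hyK)
    linarith [hwj0 l]
  have hwj : ∀ j, j ≠ l → 0 < (w j).1 := by
    intro j hj
    rcases lt_or_eq_of_le (hwj0 j) with h | h
    · exact h
    · exfalso
      apply hj
      apply hl' j
      refine ⟨ψ j x₀, ⟨x₀, hx₀K, rfl⟩, ?_⟩
      simp only [Set.mem_preimage, Set.mem_singleton_iff]
      rw [hfstψ, hx₀, mul_zero, zero_add, ← h]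
  have hoff0 : ∀ ω : List (Fin q), 0 ≤ offW ρ w ω := by
    intro ω
    induction ω with
    | nil => simp [offW]
    | cons j ω ih =>
        rw [offW_cons]
        have := mul_nonneg (hρ j).1.le ih
        linarith [hwj0 j]
  -- choose κ
  obtain ⟨κ, hκpos, hκlt⟩ : ∃ κ > (0:ℝ), ∀ j, j ≠ l → κ < (w j).1 := by
    set S : Finset (Fin q) := Finset.univ.filter (· ≠ l) with hS
    by_cases hSne : S.Nonempty
    · refine ⟨S.inf' hSne (fun j => (w j).1) / 2, ?_, ?_⟩
      · have : 0 < S.inf' hSne (fun j => (w j).1) := by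
          rw [Finset.lt_inf'_iff]
          intro j hjS
          exact hwj j (by simpa [hS] using hjS)
        linarith
      · intro j hj
        have h1 : S.inf' hSne (fun j => (w j).1) ≤ (w j).1 :=
          Finset.inf'_le _ (by simp [hS, hj])
        have : 0 < S.inf' hSne (fun j => (w j).1) := by
          rw [Finset.lt_inf'_iff]
          intro j hjS
          exact hwj j (by simpa [hS] using hjS)
        linarith
    · refine ⟨1, one_pos, fun j hj => absurd ⟨j, by simp [hS, hj]⟩ hSne⟩
  refine ⟨κ, hκpos, ?_⟩
  intro k hk ω hlen
  constructor
  · intro hne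
    by_contra hrep
    have hω : ω ≠ List.replicate ω.length l := by rwa [hlen]
    obtain ⟨m, j, ω', hj, hdec⟩ := word_decomp l ω hω
    have hm : m ≤ k - 1 := by
      have : ω.length = m + (ω'.length + 1) := by
        rw [hdec]; simp
      omega
    have hklow : ρ l ^ (k - 1) ≤ ρ l ^ m :=
      pow_le_pow_of_le_one (hρ l).1.le (hρ l).2.le hm
    have hofflarge : ρ l ^ (k - 1) * κ < offW ρ w ω := by
      rw [hdec, offW_replicate_append ρ w l hwl, offW_cons]
      have h1 : κ < ρ j * offW ρ w ω' + (w j).1 := by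
        have := mul_nonneg (hρ j).1.le (hoff0 ω')
        linarith [hκlt j hj]
      calc ρ l ^ (k - 1) * κ ≤ ρ l ^ m * κ :=
            mul_le_mul_of_nonneg_right hklow hκpos.le
        _ < ρ l ^ m * (ρ j * offW ρ w ω' + (w j).1) :=
            (mul_lt_mul_iff_right₀ (pow_pos (hρ l).1 m)).2 h1
    obtain ⟨x, ⟨y, hyK, hyx⟩, hxI⟩ := hne
    have hx1 : x.1 ≤ ρ l ^ (k - 1) * κ := hxI.2
    have : offW ρ w ω ≤ x.1 := by
      rw [← hyx, fst_wordMap ρ w ψ hψ]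
      have := mul_nonneg (wordRatio_pos ρ hρ ω).le (hK0 y hyK)
      linarith
    linarith
  · intro hrep
    refine ⟨wordMap ψ ω x₀, ⟨x₀, hx₀K, rfl⟩, ?_⟩
    have hfst : (wordMap ψ ω x₀).1 = 0 := by
      rw [fst_wordMap ρ w ψ hψ, hx₀, mul_zero, zero_add, hrep]
      have := offW_replicate_append ρ w l hwl k []
      simpa [offW] using this
    simp only [Set.mem_preimage, hfst, Set.mem_Icc, le_refl, true_and]
    exact mul_nonneg (pow_nonneg (hρ l).1.le _) hκpos.le
end

section
/- Under the hypotheses of the previous statement, there exists N ∈ ℕ such that for all k ≥ 1, K_{l^{N+k−1}} ⊂ π⁻¹[0, ρ_l^{k−1} κ] ∩ K ⊂ K_{l^k}, i.e. the part of K in the left strip of width ρ_l^{k−1}κ is sandwiched between two iterates of the leftmost cylinder. -/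
open MeasureTheory Metric Set
open scoped ENNReal

/-- With `κ > 0` chosen so that `π⁻¹[0,κ]` meets only `ψ_l(K)` among the
first-generation sets, there exists `N` such that for all `k ≥ 1`
`K_{l^{N+k-1}} ⊆ π⁻¹[0, ρ_l^{k-1}κ] ∩ K ⊆ K_{l^k}`. -/
theorem strip_sandwich (q : ℕ) (ρ : Fin q → ℝ) (w : Fin q → ℝ × ℝ)
    (hρ : ∀ j, ρ j ∈ Set.Ioo (0:ℝ) 1)
    (ψ : Fin q → (ℝ × ℝ) → (ℝ × ℝ)) (hψ : ∀ j x, ψ j x = ρ j • x + w j)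
    (K : Set (ℝ × ℝ)) (hKc : IsCompact K) (hKne : K.Nonempty)
    (hinv : K = ⋃ j, ψ j '' K)
    (hsep : Pairwise fun i j => Disjoint (ψ i '' K) (ψ j '' K))
    (hmin : IsLeast (Prod.fst '' K) 0)
    (l : Fin q) (κ : ℝ) (hκ : 0 < κ)
    (hl : ((ψ l '' K) ∩ Prod.fst ⁻¹' {(0:ℝ)}).Nonempty)
    (hκl : ∀ j, ((ψ j '' K) ∩ Prod.fst ⁻¹' Set.Icc (0:ℝ) κ).Nonempty → j = l) :
    ∃ N : ℕ, ∀ k : ℕ, 1 ≤ k →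
      wordMap ψ (List.replicate (N + k - 1) l) '' K ⊆
        Prod.fst ⁻¹' Set.Icc (0:ℝ) (ρ l ^ (k - 1) * κ) ∩ K ∧
      Prod.fst ⁻¹' Set.Icc (0:ℝ) (ρ l ^ (k - 1) * κ) ∩ K ⊆
        wordMap ψ (List.replicate k l) '' K := by
  obtain ⟨hρ0, hρ1⟩ := hρ l
  have hsub : ∀ j, ψ j '' K ⊆ K := by
    intro j
    intro x hx
    rw [hinv]
    exact Set.mem_iUnion.mpr ⟨j, hx⟩
  have hge : ∀ z ∈ K, (0:ℝ) ≤ z.1 := fun z hz => hmin.2 ⟨z, hz, rfl⟩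
  -- the first coordinate of w l is 0
  have hwl : (w l).1 = 0 := by
    obtain ⟨x, ⟨y, hy, rfl⟩, hx0⟩ := hl
    have hx0' : (ψ l y).1 = 0 := hx0
    rw [hψ] at hx0'
    have h1 : ρ l * y.1 + (w l).1 = 0 := by
      simpa using hx0'
    obtain ⟨z0, hz0, hz0f⟩ := hmin.1
    have hz0K : ψ l z0 ∈ K := hsub l ⟨z0, hz0, rfl⟩
    have h2 : (0:ℝ) ≤ (ψ l z0).1 := hge _ hz0K
    rw [hψ] at h2
    have h2' : (0:ℝ) ≤ ρ l * z0.1 + (w l).1 := by simpa using h2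
    have hy0 : 0 ≤ y.1 := hge y hy
    rw [hz0f] at h2'
    nlinarith
  have hfstψ : ∀ x : ℝ × ℝ, (ψ l x).1 = ρ l * x.1 := by
    intro x; rw [hψ]; simp [hwl]
  set F : ℕ → (ℝ × ℝ) → (ℝ × ℝ) := fun m => wordMap ψ (List.replicate m l) with hF
  have hFsucc : ∀ m x, F (m + 1) x = ψ l (F m x) := fun m x => rfl
  have hFK : ∀ m, F m '' K ⊆ K := by
    intro m
    induction m with
    | zero => intro x ⟨y, hy, hxy⟩; rwa [← hxy]
    | succ m ih =>
      rintro x ⟨y, hy, rfl⟩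
      rw [hFsucc]
      exact hsub l ⟨F m y, ih ⟨y, hy, rfl⟩, rfl⟩
  have hFfst : ∀ m x, (F m x).1 = ρ l ^ m * x.1 := by
    intro m
    induction m with
    | zero => intro x; simp [hF, wordMap]
    | succ m ih =>
      intro x
      rw [hFsucc, hfstψ, ih, pow_succ]
      ring
  -- upper bound on first coordinates of K
  obtain ⟨M, hM⟩ := (hKc.image continuous_fst).bddAbove
  set M₀ : ℝ := max M 0 with hM₀
  have hM₀le : ∀ z ∈ K, z.1 ≤ M₀ := fun z hz =>
    le_trans (hM ⟨z, hz, rfl⟩) (le_max_left _ _)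
  have hM₀0 : 0 ≤ M₀ := le_max_right _ _
  -- choose N with ρ l ^ N * M₀ ≤ κ
  obtain ⟨N, hN⟩ : ∃ N, ρ l ^ N * M₀ ≤ κ := by
    obtain ⟨n, hn⟩ := exists_pow_lt_of_lt_one (div_pos hκ (by linarith : (0:ℝ) < M₀ + 1)) hρ1
    refine ⟨n, ?_⟩
    have hpn : 0 < ρ l ^ n := pow_pos hρ0 n
    have hn' : ρ l ^ n * (M₀ + 1) < κ := (lt_div_iff₀ (by linarith)).mp hn
    nlinarith
  -- the base case: strip of width κ is in ψ l '' K
  have hbase : ∀ x ∈ K, x.1 ∈ Set.Icc (0:ℝ) κ → x ∈ ψ l '' K := by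
    intro x hx hx1
    have : x ∈ ⋃ j, ψ j '' K := hinv ▸ hx
    obtain ⟨j, hj⟩ := Set.mem_iUnion.mp this
    have := hκl j ⟨x, hj, hx1⟩
    rwa [this] at hj
  -- the right inclusion, by induction
  have hright : ∀ m, ∀ x ∈ K, x.1 ∈ Set.Icc (0:ℝ) (ρ l ^ m * κ) → x ∈ F (m + 1) '' K := by
    intro m
    induction m with
    | zero =>
      intro x hx hx1
      obtain ⟨y, hy, rfl⟩ := hbase x hx (by simpa using hx1)
      exact ⟨y, hy, rfl⟩
    | succ m ih =>
      rintro x hx ⟨h0x, h1x⟩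
      have hpow1 : ρ l ^ (m + 1) ≤ 1 := pow_le_one₀ hρ0.le hρ1.le
      have hxκ : x.1 ≤ κ := le_trans h1x (by nlinarith)
      obtain ⟨y, hy, rfl⟩ := hbase x hx ⟨h0x, hxκ⟩
      rw [hfstψ] at h1x h0x
      have hy0 : 0 ≤ y.1 := hge y hy
      have hy1 : y.1 ≤ ρ l ^ m * κ := by
        rw [pow_succ] at h1x
        nlinarith
      obtain ⟨z, hz, hzy⟩ := ih y hy ⟨hy0, hy1⟩
      exact ⟨z, hz, by rw [hFsucc, hzy]⟩
  refine ⟨N, fun k hk => ?_⟩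
  obtain ⟨k', rfl⟩ : ∃ k', k = k' + 1 := ⟨k - 1, (Nat.succ_pred_eq_of_pos hk).symm⟩
  have hks : k' + 1 - 1 = k' := rfl
  have hNks : N + (k' + 1) - 1 = N + k' := rfl
  rw [hks, hNks]
  constructor
  · rintro x ⟨y, hy, rfl⟩
    refine ⟨⟨?_, ?_⟩, hFK _ ⟨y, hy, rfl⟩⟩
    · rw [hFfst]
      exact mul_nonneg (pow_pos hρ0 _).le (hge y hy)
    · rw [hFfst]
      have hy1 : y.1 ≤ M₀ := hM₀le y hy
      have hy0 : 0 ≤ y.1 := hge y hy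
      have : ρ l ^ (N + k') * y.1 ≤ ρ l ^ k' * (ρ l ^ N * M₀) := by
        rw [pow_add, mul_comm (ρ l ^ N)]
        have h1 : 0 < ρ l ^ k' := pow_pos hρ0 _
        have h2 : 0 < ρ l ^ N := pow_pos hρ0 _
        rw [mul_assoc]
        exact mul_le_mul_of_nonneg_left (by nlinarith) h1.le
      calc ρ l ^ (N + k') * y.1 ≤ ρ l ^ k' * (ρ l ^ N * M₀) := this
        _ ≤ ρ l ^ k' * κ := mul_le_mul_of_nonneg_left hN (pow_pos hρ0 _).le
  · rintro x ⟨hx1, hx2⟩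
    exact hright k' x hx2 hx1
end

section
/- Let E ⊂ ℝ be a set of positive Lebesgue measure and η ∈ (0,1). Then for every sufficiently small ε > 0 there exists a subset E₀ ⊂ E of positive Lebesgue measure with the property: for every interval I of length ℓ(I) < ε intersecting E₀ and every compact F ⊂ I with ℋ¹(F) ≥ η·ℓ(I), one has ℋ¹(E ∩ F) ≥ η·ℓ(I)/2. -/
open MeasureTheory Set Metric
open scoped ENNReal

/-- (Lebesgue density + Egoroff.) If `E ⊆ ℝ` has positive measure and
`η ∈ (0,1)`, then for all sufficiently small `ε > 0` there is a positive-measure subset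
`E₀ ⊆ E` such that for every interval `I` of length `< ε` meeting `E₀` and every compact
`F ⊆ I` with `ℋ¹(F) ≥ η·ℓ(I)`, one has `ℋ¹(E ∩ F) ≥ η·ℓ(I)/2`. -/
theorem density_subset (E : Set ℝ) (hE : MeasurableSet E) (hEpos : 0 < volume E)
    (η : ℝ) (hη : η ∈ Set.Ioo (0:ℝ) 1) :
    ∃ ε₀ > (0:ℝ), ∀ ε : ℝ, 0 < ε → ε ≤ ε₀ →
      ∃ E₀ : Set ℝ, E₀ ⊆ E ∧ MeasurableSet E₀ ∧ 0 < volume E₀ ∧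
        ∀ a b : ℝ, a < b → b - a < ε → (Set.Icc a b ∩ E₀).Nonempty →
          ∀ F : Set ℝ, F ⊆ Set.Icc a b → IsCompact F →
            ENNReal.ofReal (η * (b - a)) ≤ volume F →
            ENNReal.ofReal (η * (b - a) / 2) ≤ volume (E ∩ F) := by
  obtain ⟨hη0, hη1⟩ := hη
  set δ : ℝ := η / 8 with hδdef
  have hδ0 : 0 < δ := by positivity
  have hδ1 : δ < 1 := by rw [hδdef]; linarith
  -- the "uniform density" sets
  set A : ℕ → Set ℝ := fun n => {x : ℝ | ∀ q : ℚ, 0 < q → (q : ℝ) < 1 / (n + 1) →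
      ENNReal.ofReal ((1 - δ) * (2 * q)) ≤ volume (E ∩ closedBall x (q : ℝ))} with hA
  have hAmeas : ∀ n, MeasurableSet (A n) := by
    intro n
    have hrw : A n = ⋂ (q : ℚ), ⋂ (_ : 0 < q), ⋂ (_ : (q : ℝ) < 1 / (n + 1)),
        {x : ℝ | ENNReal.ofReal ((1 - δ) * (2 * q)) ≤ volume (E ∩ closedBall x (q : ℝ))} := by
      ext x; simp [hA]
    rw [hrw]
    refine MeasurableSet.iInter fun q => MeasurableSet.iInter fun _ =>
      MeasurableSet.iInter fun _ => ?_
    have hm : Measurable fun x : ℝ => volume (E ∩ closedBall x (q : ℝ)) := by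
      have h1 : MeasurableSet {p : ℝ × ℝ | p.2 ∈ E ∧ dist p.2 p.1 ≤ (q : ℝ)} :=
        (hE.preimage measurable_snd).inter
          (measurableSet_le (continuous_snd.dist continuous_fst).measurable measurable_const)
      have h2 := measurable_measure_prodMk_left (ν := (volume : Measure ℝ)) h1
      convert h2 using 2
      rfl
    exact measurableSet_le measurable_const hm
  -- a.e. point of E is in some A n
  have hmem : ∀ᵐ x ∂(volume.restrict E), x ∈ ⋃ n, A n := by
    filter_upwards [Besicovitch.ae_tendsto_measure_inter_div (volume : Measure ℝ) E] with x hx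
    have hc : ENNReal.ofReal (1 - δ) < 1 := by
      rw [← ENNReal.ofReal_one]
      exact (ENNReal.ofReal_lt_ofReal_iff one_pos).2 (by linarith)
    have hev : ∀ᶠ r in nhdsWithin (0:ℝ) (Set.Ioi 0),
        ENNReal.ofReal (1 - δ) <
          volume (E ∩ closedBall x r) / volume (closedBall x r) :=
      hx.eventually_const_lt hc
    obtain ⟨u, hu, huIoo⟩ := mem_nhdsGT_iff_exists_Ioo_subset.1 hev
    obtain ⟨n, hn⟩ := exists_nat_one_div_lt (show (0:ℝ) < u from hu)
    refine Set.mem_iUnion.2 ⟨n, fun q hq0 hq1 => ?_⟩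
    have hqr : (q : ℝ) ∈ Set.Ioo (0:ℝ) u :=
      ⟨by exact_mod_cast hq0, lt_trans hq1 hn⟩
    have hratio := huIoo hqr
    have hball : volume (closedBall x (q : ℝ)) = ENNReal.ofReal (2 * q) :=
      Real.volume_closedBall x (q : ℝ)
    have hball0 : volume (closedBall x (q : ℝ)) ≠ 0 := by
      rw [hball]
      simp only [ne_eq, ENNReal.ofReal_eq_zero, not_le]
      have : (0:ℝ) < (q:ℝ) := by exact_mod_cast hq0
      linarith
    have hballt : volume (closedBall x (q : ℝ)) ≠ ∞ := by
      rw [hball]; exact ENNReal.ofReal_ne_top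
    have := (ENNReal.le_div_iff_mul_le (Or.inl hball0) (Or.inl hballt)).1 hratio.le
    calc ENNReal.ofReal ((1 - δ) * (2 * q))
        = ENNReal.ofReal (1 - δ) * ENNReal.ofReal (2 * q) := by
          rw [ENNReal.ofReal_mul (by linarith)]
      _ = ENNReal.ofReal (1 - δ) * volume (closedBall x (q : ℝ)) := by rw [hball]
      _ ≤ volume (E ∩ closedBall x (q : ℝ)) := this
  -- some A n ∩ E has positive measure
  have hUn : MeasurableSet (⋃ n, A n) := MeasurableSet.iUnion hAmeas
  have hexn : ∃ n, 0 < volume (A n ∩ E) := by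
    by_contra h
    push_neg at h
    have h0 : volume (⋃ n, A n ∩ E) = 0 :=
      measure_iUnion_null fun n => le_antisymm (by simpa using h n) bot_le
    have h1 : volume.restrict E ((⋃ n, A n)ᶜ) = 0 := by
      exact ae_iff.1 hmem
    have h2 : volume E ≤ volume.restrict E (⋃ n, A n) + volume.restrict E ((⋃ n, A n)ᶜ) := by
      calc volume E = volume.restrict E Set.univ := (Measure.restrict_apply_univ _).symm
        _ = volume.restrict E ((⋃ n, A n) ∪ (⋃ n, A n)ᶜ) := by rw [Set.union_compl_self]
        _ ≤ _ := measure_union_le _ _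
    rw [h1, add_zero, Measure.restrict_apply hUn, Set.iUnion_inter, h0] at h2
    exact absurd h2 (not_le.2 hEpos)
  obtain ⟨n, hn⟩ := hexn
  refine ⟨1 / (2 * (n + 1)), by positivity, fun ε hε hεle => ?_⟩
  refine ⟨A n ∩ E, Set.inter_subset_right, (hAmeas n).inter hE, hn, ?_⟩
  rintro a b hab hlen ⟨x, hxI, hxA, hxE⟩ F hFI hFc hF
  set ℓ : ℝ := b - a with hℓdef
  have hℓ0 : 0 < ℓ := sub_pos.2 hab
  have hℓsmall : ℓ < 1 / (2 * (n + 1)) := lt_of_lt_of_le hlen hεle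
  have hmin : ℓ < min (2 * ℓ) (1 / (n + 1)) := by
    refine lt_min (by linarith) ?_
    have : (1 : ℝ) / (2 * (n + 1)) < 1 / (n + 1) := by
      have h1 : (0:ℝ) < (n:ℝ) + 1 := by positivity
      rw [div_lt_div_iff₀ (by positivity) h1]
      nlinarith
    linarith
  obtain ⟨q, hq1, hq2⟩ := exists_rat_btwn hmin
  have hq0 : 0 < q := by exact_mod_cast lt_trans hℓ0 hq1
  have hq2ℓ : (q : ℝ) < 2 * ℓ := lt_of_lt_of_le hq2 (min_le_left _ _)
  have hqn : (q : ℝ) < 1 / (n + 1) := lt_of_lt_of_le hq2 (min_le_right _ _)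
  have hdense := hxA q hq0 hqn
  -- the interval is inside the ball of radius q around x
  have hIball : Set.Icc a b ⊆ closedBall x (q : ℝ) := by
    intro y hy
    rw [Metric.mem_closedBall]
    calc dist y x ≤ b - a := Real.dist_le_of_mem_Icc hy hxI
      _ ≤ (q : ℝ) := hq1.le
  -- the complement of E in the ball is small
  have hball : volume (closedBall x (q : ℝ)) = ENNReal.ofReal (2 * q) :=
    Real.volume_closedBall x (q : ℝ)
  have hdiff : volume (closedBall x (q : ℝ) \ E) ≤ ENNReal.ofReal (δ * (2 * q)) := by
    have hsub : closedBall x (q : ℝ) ∩ E ⊆ closedBall x (q : ℝ) := Set.inter_subset_left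
    have hmeasBE : NullMeasurableSet (closedBall x (q : ℝ) ∩ E) volume :=
      (measurableSet_closedBall.inter hE).nullMeasurableSet
    have hfin : volume (closedBall x (q : ℝ) ∩ E) ≠ ∞ :=
      ne_top_of_le_ne_top (by rw [hball]; exact ENNReal.ofReal_ne_top) (measure_mono hsub)
    have heq : closedBall x (q : ℝ) \ E = closedBall x (q : ℝ) \ (closedBall x (q : ℝ) ∩ E) := by
      rw [Set.diff_self_inter]
    rw [heq, measure_diff hsub hmeasBE hfin, hball, Set.inter_comm]
    calc ENNReal.ofReal (2 * q) - volume (E ∩ closedBall x (q : ℝ))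
        ≤ ENNReal.ofReal (2 * q) - ENNReal.ofReal ((1 - δ) * (2 * q)) :=
          tsub_le_tsub_left hdense _
      _ = ENNReal.ofReal (2 * q - (1 - δ) * (2 * q)) := by
          have hq0' : (0:ℝ) < (q:ℝ) := by exact_mod_cast hq0
          rw [ENNReal.ofReal_sub _ (mul_nonneg (by linarith) (by positivity))]
      _ = ENNReal.ofReal (δ * (2 * q)) := by
          rw [show 2 * (q:ℝ) - (1 - δ) * (2 * q) = δ * (2 * q) by ring]
  have hFE : volume (F \ E) ≤ ENNReal.ofReal (η * ℓ / 2) := by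
    calc volume (F \ E) ≤ volume (closedBall x (q : ℝ) \ E) :=
          measure_mono (Set.diff_subset_diff_left (hFI.trans hIball))
      _ ≤ ENNReal.ofReal (δ * (2 * q)) := hdiff
      _ ≤ ENNReal.ofReal (η * ℓ / 2) := by
          apply ENNReal.ofReal_le_ofReal
          rw [hδdef]
          nlinarith
  have hchain : ENNReal.ofReal (η * ℓ) ≤ volume (E ∩ F) + ENNReal.ofReal (η * ℓ / 2) := by
    calc ENNReal.ofReal (η * ℓ) ≤ volume F := hF
      _ ≤ volume (F ∩ E) + volume (F \ E) := measure_le_inter_add_diff volume F E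
      _ ≤ volume (E ∩ F) + ENNReal.ofReal (η * ℓ / 2) := by
          rw [Set.inter_comm]; exact add_le_add_right hFE _
  have := tsub_le_iff_right.2 hchain
  calc ENNReal.ofReal (η * ℓ / 2)
      = ENNReal.ofReal (η * ℓ - η * ℓ / 2) := by rw [show η * ℓ - η * ℓ / 2 = η * ℓ / 2 by ring]
    _ = ENNReal.ofReal (η * ℓ) - ENNReal.ofReal (η * ℓ / 2) := by
        rw [ENNReal.ofReal_sub _ (by positivity)]
    _ ≤ volume (E ∩ F) := this
end

section
/- Let K ⊂ ℝᵈ be a self-similar set satisfying the strong separation condition with Hausdorff dimension s, and let μ = ℋ^s|_K. If π : ℝᵈ → ℝ is a linear map with π_♯μ ≪ ℋ¹, then π_♯μ is in fact equivalent to ℋ¹|_{π(K)}: π_♯μ(A) > 0 for every A ⊂ π(K) with ℋ¹(A) > 0. -/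
open MeasureTheory Set
open scoped ENNReal

namespace PSSAux

variable {q : ℕ}

/-- Product of contraction ratios along a word. -/
def Pw (ρ : Fin q → ℝ) (l : List (Fin q)) : ℝ := (l.map ρ).prod

@[simp] lemma Pw_nil (ρ : Fin q → ℝ) : Pw ρ [] = 1 := rfl

@[simp] lemma Pw_cons (ρ : Fin q → ℝ) (j : Fin q) (l : List (Fin q)) :
    Pw ρ (j :: l) = ρ j * Pw ρ l := by simp [Pw]

lemma Pw_append (ρ : Fin q → ℝ) (l l' : List (Fin q)) :
    Pw ρ (l ++ l') = Pw ρ l * Pw ρ l' := by simp [Pw]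

lemma Pw_pos {ρ : Fin q → ℝ} (hρ : ∀ j, 0 < ρ j) (l : List (Fin q)) : 0 < Pw ρ l := by
  induction l with
  | nil => simp
  | cons j l ih => simpa using mul_pos (hρ j) ih

lemma Pw_le_one {ρ : Fin q → ℝ} (hρ0 : ∀ j, 0 < ρ j) (hρ1 : ∀ j, ρ j ≤ 1)
    (l : List (Fin q)) : Pw ρ l ≤ 1 := by
  induction l with
  | nil => simp
  | cons j l ih =>
      simpa using mul_le_one₀ (hρ1 j) (le_of_lt (Pw_pos hρ0 l)) ih

lemma Pw_rpow {ρ : Fin q → ℝ} (hρ : ∀ j, 0 < ρ j) (s : ℝ) (l : List (Fin q)) :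
    Pw ρ l ^ s = (l.map fun j => ρ j ^ s).prod := by
  induction l with
  | nil => simp
  | cons j l ih =>
      rw [Pw_cons, Real.mul_rpow (hρ j).le (Pw_pos hρ l).le, ih]
      simp

/-- A word is a prefix of a branch `σ : ℕ → Fin q`. -/
def BPre (l : List (Fin q)) (σ : ℕ → Fin q) : Prop :=
  ∀ i : ℕ, i < l.length → l[i]? = some (σ i)

/-- The key combinatorial lemma: if a finite family of words covers all branches
(each branch has some word of the family as a prefix), then the total weight is at
least 1, where the weight of a word is the product of `a j` along it and `∑ a = 1`. -/
lemma tree_lemma {ι : Type*} [Nonempty (Fin q)] (a : Fin q → ℝ) (ha : ∀ j, 0 < a j)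
    (hsum : ∑ j, a j = 1) :
    ∀ (N : ℕ) (F : Finset ι) (w : ι → List (Fin q)), (∑ n ∈ F, (w n).length) ≤ N →
      (∀ σ : ℕ → Fin q, ∃ n ∈ F, BPre (w n) σ) →
      1 ≤ ∑ n ∈ F, ((w n).map a).prod := by
  classical
  have haprod : ∀ l : List (Fin q), 0 ≤ (l.map a).prod := by
    intro l
    induction l with
    | nil => simp
    | cons j l ih => simpa using mul_nonneg (ha j).le ih
  intro N
  induction N with
  | zero =>
      intro F w hlen hcov
      obtain ⟨n, hnF, hpre⟩ := hcov (fun _ => Classical.arbitrary _)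
      have hn0 : (w n).length = 0 := by
        have := Finset.sum_le_sum_of_subset (Finset.singleton_subset_iff.2 hnF)
          (f := fun n => (w n).length)
        simp only [Finset.sum_singleton] at this
        omega
      have : w n = [] := List.eq_nil_of_length_eq_zero hn0
      calc (1:ℝ) = ((w n).map a).prod := by simp [this]
        _ ≤ ∑ n ∈ F, ((w n).map a).prod :=
          Finset.single_le_sum (fun i _ => haprod _) hnF
  | succ N ih =>
      intro F w hlen hcov
      by_cases hnil : ∃ n ∈ F, w n = []
      · obtain ⟨n, hnF, hn⟩ := hnil
        calc (1:ℝ) = ((w n).map a).prod := by simp [hn]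
          _ ≤ _ := Finset.single_le_sum (fun i _ => haprod _) hnF
      · push_neg at hnil
        -- each word is nonempty; split according to head
        set Fj : Fin q → Finset ι := fun j => F.filter (fun n => (w n).head? = some j)
          with hFj
        have hmem : ∀ j n, n ∈ Fj j ↔ n ∈ F ∧ (w n).head? = some j := by
          intro j n; simp [hFj]
        have hcons : ∀ j, ∀ n ∈ Fj j, ∃ t, w n = j :: t := by
          intro j n hn
          rw [hmem] at hn
          obtain ⟨c, t, hct⟩ := List.exists_cons_of_ne_nil (hnil n hn.1)
          have hcj : c = j := by
            have h2 := hn.2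
            rw [hct] at h2
            simpa using h2
          exact ⟨t, by rw [hct, hcj]⟩
        -- covering for shifted families
        have hcovj : ∀ j, ∀ τ : ℕ → Fin q, ∃ n ∈ Fj j, BPre (w n).tail τ := by
          intro j τ
          obtain ⟨n, hnF, hpre⟩ := hcov (fun k => Nat.casesOn k j (fun m => τ m))
          have hlen1 : 0 < (w n).length := List.length_pos_iff.2 (hnil n hnF)
          obtain ⟨c, t, hct⟩ := List.exists_cons_of_ne_nil (hnil n hnF)
          have h0 := hpre 0 hlen1
          rw [hct] at h0
          simp only [List.getElem?_cons_zero] at h0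
          have hcj : c = j := by simpa using h0
          have hhead : (w n).head? = some j := by rw [hct, hcj]; rfl
          refine ⟨n, (hmem j n).2 ⟨hnF, hhead⟩, ?_⟩
          intro i hi
          have hi' : i + 1 < (w n).length := by
            rw [hct] at hi ⊢; simp at hi ⊢; omega
          have := hpre (i + 1) hi'
          rw [hct] at this ⊢
          simpa using this
        have hFjne : ∀ j, (Fj j).Nonempty := by
          intro j
          obtain ⟨n, hn, _⟩ := hcovj j (fun _ => j)
          exact ⟨n, hn⟩
        -- length decreases
        have hlenj : ∀ j, (∑ n ∈ Fj j, ((w n).tail).length) ≤ N := by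
          intro j
          have h1 : ∀ n ∈ Fj j, ((w n).tail).length + 1 = (w n).length := by
            intro n hn
            obtain ⟨t, ht⟩ := hcons j n hn
            rw [ht]; simp
          have h2 : (∑ n ∈ Fj j, (w n).length) ≤ N + 1 :=
            le_trans (Finset.sum_le_sum_of_subset (Finset.filter_subset _ _)) hlen
          have h3 : (∑ n ∈ Fj j, ((w n).tail).length) + (Fj j).card
              = ∑ n ∈ Fj j, (w n).length := by
            rw [← Finset.sum_congr rfl h1, Finset.sum_add_distrib]
            simp
          have h4 : 1 ≤ (Fj j).card := Finset.card_pos.2 (hFjne j)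
          omega
        have hIH : ∀ j, 1 ≤ ∑ n ∈ Fj j, (((w n).tail).map a).prod := by
          intro j
          exact ih (Fj j) (fun n => (w n).tail) (hlenj j) (hcovj j)
        -- sum over F splits over heads
        have hdisj : ∀ j₁ ∈ (Finset.univ : Finset (Fin q)), ∀ j₂ ∈ Finset.univ,
            j₁ ≠ j₂ → Disjoint (Fj j₁) (Fj j₂) := by
          intro j₁ _ j₂ _ hne
          refine Finset.disjoint_left.2 ?_
          intro n h1 h2
          rw [hmem] at h1 h2
          exact hne (by rw [h1.2] at h2; exact Option.some.inj h2.2)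
        have hsub : (Finset.univ : Finset (Fin q)).biUnion Fj ⊆ F := by
          intro n hn
          simp only [Finset.mem_biUnion] at hn
          obtain ⟨j, _, hj⟩ := hn
          exact ((hmem j n).1 hj).1
        calc (1:ℝ) = ∑ j, a j := hsum.symm
          _ ≤ ∑ j, a j * ∑ n ∈ Fj j, (((w n).tail).map a).prod := by
              refine Finset.sum_le_sum ?_
              intro j _
              nlinarith [hIH j, (ha j).le]
          _ = ∑ j, ∑ n ∈ Fj j, ((w n).map a).prod := by
              refine Finset.sum_congr rfl ?_
              intro j _
              rw [Finset.mul_sum]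
              refine Finset.sum_congr rfl ?_
              intro n hn
              obtain ⟨t, ht⟩ := hcons j n hn
              rw [ht]; simp
          _ = ∑ n ∈ (Finset.univ : Finset (Fin q)).biUnion Fj, ((w n).map a).prod :=
              (Finset.sum_biUnion hdisj).symm
          _ ≤ ∑ n ∈ F, ((w n).map a).prod :=
              Finset.sum_le_sum_of_subset_of_nonneg hsub (fun i _ _ => haprod _)


/-! ### Iterated maps along words -/

variable {X : Type*} [MetricSpace X]

/-- Iterate of the IFS along a word. -/
def Ψw (ψ : Fin q → X → X) : List (Fin q) → X → X
  | [] => id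
  | j :: l => ψ j ∘ Ψw ψ l

@[simp] lemma Ψw_nil (ψ : Fin q → X → X) : Ψw ψ [] = id := rfl

@[simp] lemma Ψw_cons (ψ : Fin q → X → X) (j : Fin q) (l : List (Fin q)) :
    Ψw ψ (j :: l) = ψ j ∘ Ψw ψ l := rfl

lemma Ψw_append (ψ : Fin q → X → X) (l l' : List (Fin q)) :
    Ψw ψ (l ++ l') = Ψw ψ l ∘ Ψw ψ l' := by
  induction l with
  | nil => simp
  | cons j l ih => simp [ih, Function.comp_assoc]

variable {ρ : Fin q → ℝ} {ψ : Fin q → X → X} {K : Set X}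

lemma Ψw_dist (hsim : ∀ j x y, dist (ψ j x) (ψ j y) = ρ j * dist x y)
    (l : List (Fin q)) (x y : X) :
    dist (Ψw ψ l x) (Ψw ψ l y) = Pw ρ l * dist x y := by
  induction l with
  | nil => simp
  | cons j l ih => simp [hsim, ih, mul_assoc]

lemma Ψw_image_subset (hinvs : ∀ j, ψ j '' K ⊆ K) (l : List (Fin q)) :
    Ψw ψ l '' K ⊆ K := by
  induction l with
  | nil => simp
  | cons j l ih =>
      rw [Ψw_cons, Set.image_comp]
      exact (Set.image_mono ih).trans (hinvs j)

lemma Ψw_prefix_subset (hinvs : ∀ j, ψ j '' K ⊆ K) {l l' : List (Fin q)}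
    (h : l <+: l') : Ψw ψ l' '' K ⊆ Ψw ψ l '' K := by
  obtain ⟨t, rfl⟩ := h
  rw [Ψw_append, Set.image_comp]
  exact Set.image_mono (Ψw_image_subset hinvs t)

/-- The length-`n` prefix of a branch, as a word. -/
def pre (σ : ℕ → Fin q) (n : ℕ) : List (Fin q) := List.ofFn (fun i : Fin n => σ i)

@[simp] lemma pre_zero (σ : ℕ → Fin q) : pre σ 0 = [] := rfl

@[simp] lemma pre_length (σ : ℕ → Fin q) (n : ℕ) : (pre σ n).length = n := by
  simp [pre]

lemma pre_succ (σ : ℕ → Fin q) (n : ℕ) :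
    pre σ (n + 1) = pre σ n ++ [σ n] := by
  rw [pre, List.ofFn_succ']
  simp [pre, List.concat_eq_append]

lemma pre_getElem? (σ : ℕ → Fin q) (n i : ℕ) (h : i < n) :
    (pre σ n)[i]? = some (σ i) := by
  rw [pre]
  rw [List.getElem?_eq_getElem (by simpa using h)]
  simp

lemma pre_bpre (σ : ℕ → Fin q) (n : ℕ) : BPre (pre σ n) σ := by
  intro i hi
  exact pre_getElem? σ n i (by simpa using hi)

lemma pre_take {m n : ℕ} (hmn : m ≤ n) (σ : ℕ → Fin q) :
    (pre σ n).take m = pre σ m := by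
  apply List.ext_getElem (by simp [min_eq_left hmn])
  intro i h1 h2
  simp only [pre, List.getElem_take, List.getElem_ofFn]

lemma prefix_of_pre {σ : ℕ → Fin q} {n : ℕ} {u : List (Fin q)}
    (h : u <+: pre σ n) : u = pre σ u.length := by
  have hlen : u.length ≤ n := by simpa using h.length_le
  rw [List.prefix_iff_eq_take.1 h, pre_take hlen]
  simp

lemma Pw_pre_le (hρ0 : ∀ j, 0 < ρ j) {R : ℝ} (hR : ∀ j, ρ j ≤ R)
    (hR0 : 0 ≤ R) (σ : ℕ → Fin q) (n : ℕ) : Pw ρ (pre σ n) ≤ R ^ n := by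
  induction n with
  | zero => simp
  | succ n ih =>
      rw [pre_succ, Pw_append]
      have h1 : (0:ℝ) ≤ Pw ρ [σ n] := (Pw_pos hρ0 _).le
      have h2 : Pw ρ [σ n] ≤ R := by simpa [Pw] using hR (σ n)
      calc Pw ρ (pre σ n) * Pw ρ [σ n] ≤ R ^ n * R :=
            mul_le_mul ih h2 h1 (pow_nonneg hR0 n)
        _ = R ^ (n+1) := by ring

/-! ### Branches through points of the attractor -/

/-! ### Cut sets -/

/-- The set of words that cross scale `θ` for the first time. -/
def Cut (ρ : Fin q → ℝ) (θ : ℝ) : Set (List (Fin q)) :=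
  {l | Pw ρ l ≤ θ ∧ ∀ u, u <+: l → u ≠ l → θ < Pw ρ u}

lemma exists_cut (hρ : ∀ j, ρ j ∈ Set.Ioo (0:ℝ) 1) {R : ℝ} (hR : ∀ j, ρ j ≤ R)
    (hR0 : 0 ≤ R) (hR1 : R < 1) {θ : ℝ} (hθ : 0 < θ) (σ : ℕ → Fin q) :
    ∃ n, pre σ n ∈ Cut ρ θ := by
  classical
  have hρ0 : ∀ j, 0 < ρ j := fun j => (hρ j).1
  have hex : ∃ n, Pw ρ (pre σ n) ≤ θ := by
    obtain ⟨n, hn⟩ := exists_pow_lt_of_lt_one hθ hR1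
    exact ⟨n, le_trans (Pw_pre_le hρ0 hR hR0 σ n) hn.le⟩
  let n := Nat.find hex
  refine ⟨n, Nat.find_spec hex, ?_⟩
  intro u hu hne
  have hu' : u = pre σ u.length := prefix_of_pre hu
  have hulen : u.length ≤ n := by simpa using hu.length_le
  have hlt : u.length < n := by
    rcases lt_or_eq_of_le hulen with h | h
    · exact h
    · exfalso; apply hne; rw [hu', h]
  have := Nat.find_min hex hlt
  rw [hu']
  exact lt_of_not_ge (by simpa using this)

lemma cut_not_prefix {θ : ℝ} {w₁ w₂ : List (Fin q)}
    (h₁ : w₁ ∈ Cut ρ θ) (h₂ : w₂ ∈ Cut ρ θ) (hpre : w₁ <+: w₂) : w₁ = w₂ := by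
  by_contra hne
  exact absurd h₁.1 (not_le.2 (h₂.2 w₁ hpre hne))

lemma exists_fork {w₁ w₂ : List (Fin q)} (h1 : ¬ w₁ <+: w₂) (h2 : ¬ w₂ <+: w₁) :
    ∃ (u : List (Fin q)) (i j : Fin q), i ≠ j ∧ u ++ [i] <+: w₁ ∧ u ++ [j] <+: w₂ := by
  induction w₁ generalizing w₂ with
  | nil => exact absurd (List.nil_prefix) h1
  | cons a t₁ ih =>
      cases w₂ with
      | nil => exact absurd (List.nil_prefix) h2
      | cons b t₂ =>
          by_cases hab : a = b
          · subst hab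
            have h1' : ¬ t₁ <+: t₂ := fun h => h1 (List.cons_prefix_cons.2 ⟨rfl, h⟩)
            have h2' : ¬ t₂ <+: t₁ := fun h => h2 (List.cons_prefix_cons.2 ⟨rfl, h⟩)
            obtain ⟨u, i, j, hij, hu1, hu2⟩ := ih h1' h2'
            exact ⟨a :: u, i, j, hij, List.cons_prefix_cons.2 ⟨rfl, hu1⟩,
              List.cons_prefix_cons.2 ⟨rfl, hu2⟩⟩
          · refine ⟨[], a, b, hab, ?_, ?_⟩
            · simpa using List.cons_prefix_cons.2 ⟨rfl, List.nil_prefix⟩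
            · simpa using List.cons_prefix_cons.2 ⟨rfl, List.nil_prefix⟩

lemma cut_separated (hsim : ∀ j x y, dist (ψ j x) (ψ j y) = ρ j * dist x y)
    (hρ0 : ∀ j, 0 < ρ j) (hinvs : ∀ j, ψ j '' K ⊆ K)
    {ε0 : ℝ} (hε0 : 0 < ε0)
    (hsep' : ∀ i j : Fin q, i ≠ j → ∀ a ∈ ψ i '' K, ∀ b ∈ ψ j '' K, ε0 ≤ dist a b)
    {θ : ℝ} {w₁ w₂ : List (Fin q)} (h₁ : w₁ ∈ Cut ρ θ) (h₂ : w₂ ∈ Cut ρ θ)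
    (hne : w₁ ≠ w₂) {x₁ x₂ : X} (hx₁ : x₁ ∈ Ψw ψ w₁ '' K) (hx₂ : x₂ ∈ Ψw ψ w₂ '' K) :
    θ * ε0 < dist x₁ x₂ := by
  have hp1 : ¬ w₁ <+: w₂ := fun h => hne (cut_not_prefix h₁ h₂ h)
  have hp2 : ¬ w₂ <+: w₁ := fun h => hne.symm (cut_not_prefix h₂ h₁ h)
  obtain ⟨u, i, j, hij, hu1, hu2⟩ := exists_fork hp1 hp2
  have hx₁' : x₁ ∈ Ψw ψ (u ++ [i]) '' K := Ψw_prefix_subset hinvs hu1 hx₁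
  have hx₂' : x₂ ∈ Ψw ψ (u ++ [j]) '' K := Ψw_prefix_subset hinvs hu2 hx₂
  rw [Ψw_append, Set.image_comp] at hx₁' hx₂'
  obtain ⟨a, ha, rfl⟩ := hx₁'
  obtain ⟨b, hb, rfl⟩ := hx₂'
  have ha' : a ∈ ψ i '' K := by simpa [Set.image_comp] using ha
  have hb' : b ∈ ψ j '' K := by simpa [Set.image_comp] using hb
  have hdistab : ε0 ≤ dist a b := hsep' i j hij a ha' b hb'
  have hΨ : dist (Ψw ψ u a) (Ψw ψ u b) = Pw ρ u * dist a b := Ψw_dist hsim u a b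
  have hu_proper : u ≠ w₁ := by
    intro h
    have := hu1.length_le
    rw [h] at this
    simp at this
  have huθ : θ < Pw ρ u := h₁.2 u ((List.prefix_append u [i]).trans hu1) hu_proper
  calc θ * ε0 < Pw ρ u * ε0 := by
        exact mul_lt_mul_of_pos_right huθ hε0
    _ ≤ Pw ρ u * dist a b :=
        mul_le_mul_of_nonneg_left hdistab (Pw_pos hρ0 u).le
    _ = dist (Ψw ψ u a) (Ψw ψ u b) := hΨ.symm

lemma exists_cut_mem_aux (hρ : ∀ j, ρ j ∈ Set.Ioo (0:ℝ) 1) (hinv : K = ⋃ j, ψ j '' K)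
    {R : ℝ} (hR : ∀ j, ρ j ≤ R) (hR0 : 0 < R) :
    ∀ (n : ℕ) (θ : ℝ), R ^ n ≤ θ → ∀ x ∈ K, ∃ w ∈ Cut ρ θ, x ∈ Ψw ψ w '' K := by
  have hρ0 : ∀ j, 0 < ρ j := fun j => (hρ j).1
  intro n
  induction n with
  | zero =>
      intro θ hθ x hx
      refine ⟨[], ⟨by simpa using hθ, ?_⟩, by simpa using hx⟩
      intro u hu hne
      exact absurd (List.prefix_nil.1 hu) hne
  | succ n ih =>
      intro θ hθ x hx
      by_cases h1 : (1:ℝ) ≤ θ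
      · refine ⟨[], ⟨by simpa using h1, ?_⟩, by simpa using hx⟩
        intro u hu hne
        exact absurd (List.prefix_nil.1 hu) hne
      · push_neg at h1
        have hx' := hx
        rw [hinv] at hx'
        simp only [Set.mem_iUnion, Set.mem_image] at hx'
        obtain ⟨j, y, hy, hyx⟩ := hx'
        have hθ' : R ^ n ≤ θ / ρ j := by
          rw [le_div_iff₀ (hρ0 j)]
          calc R ^ n * ρ j ≤ R ^ n * R := by
                exact mul_le_mul_of_nonneg_left (hR j) (pow_nonneg hR0.le n)
            _ = R ^ (n + 1) := by ring
            _ ≤ θ := hθ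
        obtain ⟨w', hw', hyw'⟩ := ih (θ / ρ j) hθ' y hy
        refine ⟨j :: w', ⟨?_, ?_⟩, ?_⟩
        · rw [Pw_cons]
          calc ρ j * Pw ρ w' ≤ ρ j * (θ / ρ j) :=
                mul_le_mul_of_nonneg_left hw'.1 (hρ0 j).le
            _ = θ := by rw [mul_comm]; exact div_mul_cancel₀ θ (ne_of_gt (hρ0 j))
        · intro u hu hne
          cases u with
          | nil => simpa using h1
          | cons c u' =>
              obtain ⟨hc, hu'⟩ := List.cons_prefix_cons.1 hu
              subst hc
              have hne' : u' ≠ w' := fun h => hne (by rw [h])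
              have := hw'.2 u' hu' hne'
              rw [Pw_cons]
              calc θ = ρ c * (θ / ρ c) := by
                    rw [mul_comm]; exact (div_mul_cancel₀ θ (ne_of_gt (hρ0 c))).symm
                _ < ρ c * Pw ρ u' := mul_lt_mul_of_pos_left this (hρ0 c)
        · rw [Ψw_cons, Set.image_comp]
          exact ⟨y, hyw', hyx⟩

lemma exists_cut_mem (hρ : ∀ j, ρ j ∈ Set.Ioo (0:ℝ) 1) (hinv : K = ⋃ j, ψ j '' K)
    {R : ℝ} (hR : ∀ j, ρ j ≤ R) (hR0 : 0 < R) (hR1 : R < 1)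
    {θ : ℝ} (hθ : 0 < θ) {x : X} (hx : x ∈ K) :
    ∃ w ∈ Cut ρ θ, x ∈ Ψw ψ w '' K := by
  obtain ⟨n, hn⟩ := exists_pow_lt_of_lt_one hθ hR1
  exact exists_cut_mem_aux hρ hinv hR hR0 n θ hn.le x hx

lemma Ψw_continuous (hcont : ∀ j, Continuous (ψ j)) (l : List (Fin q)) :
    Continuous (Ψw ψ l) := by
  induction l with
  | nil => simpa using continuous_id
  | cons j l ih => exact (hcont j).comp ih

/-- A handy bound: `(x + y) ^ s ≤ 2 ^ s * (x ^ s + y ^ s)` for nonnegative reals. -/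
lemma add_rpow_le {x y s : ℝ} (hx : 0 ≤ x) (hy : 0 ≤ y) (hs : 0 < s) :
    (x + y) ^ s ≤ 2 ^ s * (x ^ s + y ^ s) := by
  have h1 : x + y ≤ 2 * max x y := by
    rcases le_total x y with h | h
    · calc x + y ≤ y + y := by linarith
        _ = 2 * y := by ring
        _ ≤ 2 * max x y := by rw [max_eq_right h]
    · calc x + y ≤ x + x := by linarith
        _ = 2 * x := by ring
        _ ≤ 2 * max x y := by rw [max_eq_left h]
  have hmax : 0 ≤ max x y := le_trans hx (le_max_left _ _)
  calc (x + y) ^ s ≤ (2 * max x y) ^ s :=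
        Real.rpow_le_rpow (by linarith) h1 hs.le
    _ = 2 ^ s * (max x y) ^ s := Real.mul_rpow (by norm_num) hmax
    _ ≤ 2 ^ s * (x ^ s + y ^ s) := by
        have : (max x y) ^ s ≤ x ^ s + y ^ s := by
          rcases max_cases x y with ⟨h, _⟩ | ⟨h, _⟩
          · rw [h]; nlinarith [Real.rpow_nonneg hy s]
          · rw [h]; nlinarith [Real.rpow_nonneg hx s]
        have h2s : (0:ℝ) ≤ 2 ^ s := (Real.rpow_pos_of_pos two_pos s).le
        nlinarith

/-- Hutchinson's lower bound: a self-similar set with strong separation has positive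
`s`-dimensional Hausdorff measure when `∑ ρ j ^ s = 1`. -/
theorem hausdorff_pos {X : Type*} [MetricSpace X] [MeasurableSpace X] [BorelSpace X]
    {q : ℕ} {ρ : Fin q → ℝ} (hρ : ∀ j, ρ j ∈ Set.Ioo (0:ℝ) 1)
    {ψ : Fin q → X → X} (hsim : ∀ j x y, dist (ψ j x) (ψ j y) = ρ j * dist x y)
    {K : Set X} (hKc : IsCompact K) (hKne : K.Nonempty)
    (hinv : K = ⋃ j, ψ j '' K)
    (hsep : Pairwise fun i j : Fin q => Disjoint (ψ i '' K) (ψ j '' K))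
    {s : ℝ} (hs : 0 < s) (hdim : ∑ j, ρ j ^ s = 1) :
    0 < μH[s] K := by
  classical
  have hρ0 : ∀ j, 0 < ρ j := fun j => (hρ j).1
  have hρ1 : ∀ j, ρ j < 1 := fun j => (hρ j).2
  -- q is positive
  have hq : 0 < q := by
    rcases Nat.eq_zero_or_pos q with h | h
    · subst h; simp at hdim
    · exact h
  haveI : Nonempty (Fin q) := Fin.pos_iff_nonempty.1 hq
  -- maximal contraction ratio
  obtain ⟨R, hR, hR1, hR0⟩ : ∃ R : ℝ, (∀ j, ρ j ≤ R) ∧ R < 1 ∧ 0 < R := by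
    refine ⟨Finset.univ.sup' Finset.univ_nonempty ρ, fun j => Finset.le_sup' ρ (Finset.mem_univ j), ?_, ?_⟩
    · exact (Finset.sup'_lt_iff _).2 fun j _ => hρ1 j
    · obtain ⟨j⟩ := (inferInstance : Nonempty (Fin q))
      exact lt_of_lt_of_le (hρ0 j) (Finset.le_sup' ρ (Finset.mem_univ j))
  -- the maps are continuous
  have hcont : ∀ j, Continuous (ψ j) := by
    intro j
    refine (LipschitzWith.of_dist_le_mul (K := Real.toNNReal (ρ j)) ?_).continuous
    intro x y
    rw [Real.coe_toNNReal _ (hρ0 j).le, hsim]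
  have himg : ∀ j, IsCompact (ψ j '' K) := fun j => hKc.image (hcont j)
  have hinvs : ∀ j, ψ j '' K ⊆ K := fun j =>
    subset_trans (Set.subset_iUnion (fun i => ψ i '' K) j) hinv.symm.subset
  -- uniform separation constant
  have hsel : ∀ p : Fin q × Fin q, ∃ e : ℝ, 0 < e ∧
      (p.1 ≠ p.2 → ∀ a ∈ ψ p.1 '' K, ∀ b ∈ ψ p.2 '' K, e ≤ dist a b) := by
    intro p
    by_cases hp : p.1 = p.2
    · exact ⟨1, one_pos, fun h => absurd hp h⟩
    · obtain ⟨δ, hδ, hdisj⟩ := (hsep hp).exists_thickenings (himg p.1) (himg p.2).isClosed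
      refine ⟨δ, hδ, fun _ a ha b hb => ?_⟩
      by_contra hc
      push_neg at hc
      have h1 : b ∈ Metric.thickening δ (ψ p.1 '' K) :=
        Metric.mem_thickening_iff.2 ⟨a, ha, by rwa [dist_comm]⟩
      have h2 : b ∈ Metric.thickening δ (ψ p.2 '' K) :=
        Metric.self_subset_thickening hδ _ hb
      exact hdisj.le_bot ⟨h1, h2⟩
  choose e he0 hesep using hsel
  obtain ⟨ε0, hε0, hε0le⟩ : ∃ ε0 : ℝ, 0 < ε0 ∧ ∀ p, ε0 ≤ e p := by
    refine ⟨(Finset.univ.image e).min' (Finset.Nonempty.image Finset.univ_nonempty e), ?_, ?_⟩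
    · obtain ⟨p, _, hp⟩ := Finset.mem_image.1
        ((Finset.univ.image e).min'_mem (Finset.Nonempty.image Finset.univ_nonempty e))
      rw [← hp]; exact he0 p
    · intro p
      exact Finset.min'_le _ _ (Finset.mem_image_of_mem e (Finset.mem_univ p))
  have hsep' : ∀ i j : Fin q, i ≠ j → ∀ a ∈ ψ i '' K, ∀ b ∈ ψ j '' K, ε0 ≤ dist a b :=
    fun i j hij a ha b hb => le_trans (hε0le (i, j)) (hesep (i, j) hij a ha b hb)
  -- constants
  set g : ℝ := (2:ℝ)⁻¹ ^ s with hgdef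
  have hg0 : 0 < g := Real.rpow_pos_of_pos (by norm_num) s
  have hg1 : g < 1 := Real.rpow_lt_one (by norm_num) (by norm_num) hs
  set Cs : ℝ := (1 - g)⁻¹ with hCsdef
  have hCs0 : 0 < Cs := inv_pos.2 (by linarith)
  have he0s : (0:ℝ) < ε0 ^ s := Real.rpow_pos_of_pos hε0 s
  have h2s : (0:ℝ) < (2:ℝ) ^ s := Real.rpow_pos_of_pos two_pos s
  set b : ℝ := ε0 ^ s / ((2:ℝ) ^ s * 2 * Cs) with hbdef
  have hb0 : 0 < b := by positivity
  set κ : ℝ := b ^ s⁻¹ / 2 with hκdef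
  have hκ0 : 0 < κ := by positivity
  have h2κ : (2 * κ) ^ s = b := by
    rw [hκdef]
    rw [mul_div_cancel₀ _ (two_ne_zero)]
    exact Real.rpow_inv_rpow hb0.le (ne_of_gt hs)
  set creal : ℝ := ε0 ^ s / ((2:ℝ) ^ s * 2) with hcrealdef
  have hcreal : 0 < creal := by positivity
  -- it suffices to bound the sum over any countable cover
  refine lt_of_lt_of_le (show (0:ℝ≥0∞) < ENNReal.ofReal creal from ENNReal.ofReal_pos.2 hcreal) ?_
  rw [MeasureTheory.Measure.hausdorffMeasure_apply]
  refine le_iSup₂_of_le 1 one_pos ?_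
  refine le_iInf fun t => le_iInf fun hcovt => le_iInf fun hdiamt => ?_
  -- notation for diameters
  set d : ℕ → ℝ := fun n => Metric.diam (t n) with hddef
  have hd0 : ∀ n, 0 ≤ d n := fun n => Metric.diam_nonneg
  have hbdd : ∀ n, Bornology.IsBounded (t n) := by
    intro n
    rw [Metric.isBounded_iff_ediam_ne_top]
    exact ne_top_of_le_ne_top ENNReal.one_ne_top (hdiamt n)
  -- thickened open cover
  set κn : ℕ → ℝ := fun n => κ * (2:ℝ)⁻¹ ^ n with hκndef
  have hκn0 : ∀ n, 0 < κn n := fun n => by positivity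
  set V : ℕ → Set X := fun n => Metric.thickening (κn n) (t n) with hVdef
  have hVopen : ∀ n, IsOpen (V n) := fun n => Metric.isOpen_thickening
  have hVbdd : ∀ n, Bornology.IsBounded (V n) := fun n => (hbdd n).thickening
  have hVdiam : ∀ n, Metric.diam (V n) ≤ d n + 2 * κn n := fun n =>
    Metric.diam_thickening_le _ (hκn0 n).le
  have hKV : K ⊆ ⋃ n, V n :=
    hcovt.trans (Set.iUnion_mono fun n => Metric.self_subset_thickening (hκn0 n) _)
  obtain ⟨F, hF⟩ := hKc.elim_finite_subcover V hVopen hKV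
  -- scales
  set θ : ℕ → ℝ := fun n => (d n + 2 * κn n) / ε0 with hθdef
  have hθ0 : ∀ n, 0 < θ n := fun n => by
    have := hd0 n; have := hκn0 n
    apply div_pos (by linarith) hε0
  have hθε0 : ∀ n, θ n * ε0 = d n + 2 * κn n := fun n =>
    div_mul_cancel₀ _ (ne_of_gt hε0)
  -- the selected points and cut words
  set F' : Finset ℕ := F.filter (fun n => (V n ∩ K).Nonempty) with hF'def
  have hsel2 : ∀ n : ℕ, ∃ p : X × List (Fin q), n ∈ F' →
      p.1 ∈ V n ∧ p.1 ∈ K ∧ p.2 ∈ Cut ρ (θ n) ∧ p.1 ∈ Ψw ψ p.2 '' K := by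
    intro n
    by_cases hn : n ∈ F'
    · have hne : (V n ∩ K).Nonempty := (Finset.mem_filter.1 hn).2
      obtain ⟨x, hxV, hxK⟩ := hne
      obtain ⟨w', hw', hxw'⟩ := exists_cut_mem hρ hinv hR hR0 hR1 (hθ0 n) hxK
      exact ⟨(x, w'), fun _ => ⟨hxV, hxK, hw', hxw'⟩⟩
    · exact ⟨(hKne.some, []), fun h => absurd h hn⟩
  choose P hP using hsel2
  set w : ℕ → List (Fin q) := fun n => (P n).2 with hwdef
  -- every branch passes through one of the cut words
  have hcov' : ∀ σ : ℕ → Fin q, ∃ n ∈ F', BPre (w n) σ := by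
    intro σ
    -- the point coded by σ
    have hC : ∀ n, IsCompact (Ψw ψ (pre σ n) '' K) := fun n =>
      hKc.image (Ψw_continuous hcont _)
    have hCdec : ∀ n, Ψw ψ (pre σ (n+1)) '' K ⊆ Ψw ψ (pre σ n) '' K := by
      intro n
      refine Ψw_prefix_subset hinvs ⟨[σ n], (pre_succ σ n).symm⟩
    have hCne : ∀ n, (Ψw ψ (pre σ n) '' K).Nonempty := fun n => hKne.image _
    obtain ⟨x, hx⟩ := IsCompact.nonempty_iInter_of_sequence_nonempty_isCompact_isClosed
      _ hCdec hCne (by simpa using hKc) (fun n => (hC n).isClosed)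
    have hxmem : ∀ n, x ∈ Ψw ψ (pre σ n) '' K := by
      intro n
      exact Set.mem_iInter.1 hx n
    have hxK : x ∈ K := by
      have := hxmem 0
      simpa using this
    obtain ⟨n, hnF, hxV⟩ : ∃ n ∈ F, x ∈ V n := by
      have := hF hxK
      simpa using this
    have hnF' : n ∈ F' := Finset.mem_filter.2 ⟨hnF, ⟨x, hxV, hxK⟩⟩
    obtain ⟨m, hm⟩ := exists_cut hρ hR hR0.le hR1 (hθ0 n) σ
    have hPn := hP n hnF'
    have heq : pre σ m = w n := by
      by_contra hne
      have hd1 : θ n * ε0 < dist x (P n).1 :=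
        cut_separated hsim hρ0 hinvs hε0 hsep' hm hPn.2.2.1 hne (hxmem m) hPn.2.2.2
      have hd2 : dist x (P n).1 ≤ Metric.diam (V n) :=
        Metric.dist_le_diam_of_mem (hVbdd n) hxV hPn.1
      have := hVdiam n
      rw [hθε0 n] at hd1
      linarith
    exact ⟨n, hnF', heq ▸ pre_bpre σ m⟩
  -- apply the tree lemma
  have htree : 1 ≤ ∑ n ∈ F', ((w n).map (fun j => ρ j ^ s)).prod :=
    tree_lemma (fun j => ρ j ^ s) (fun j => Real.rpow_pos_of_pos (hρ0 j) s) hdim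
      (∑ n ∈ F', (w n).length) F' w le_rfl hcov'
  have htree' : 1 ≤ ∑ n ∈ F', Pw ρ (w n) ^ s := by
    refine le_trans htree (le_of_eq ?_)
    exact Finset.sum_congr rfl fun n _ => (Pw_rpow hρ0 s (w n)).symm
  -- per-term bound
  have hterm : ∀ n ∈ F', Pw ρ (w n) ^ s ≤
      (2:ℝ) ^ s / ε0 ^ s * (d n ^ s + (2 * κn n) ^ s) := by
    intro n hn
    have h1 : Pw ρ (w n) ≤ θ n := (hP n hn).2.2.1.1
    have h2 : Pw ρ (w n) ^ s ≤ θ n ^ s :=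
      Real.rpow_le_rpow (Pw_pos hρ0 _).le h1 hs.le
    refine le_trans h2 ?_
    have h3 : θ n ^ s = (d n + 2 * κn n) ^ s / ε0 ^ s := by
      have hrfl : θ n = (d n + 2 * κn n) / ε0 := rfl
      rw [hrfl, Real.div_rpow (by positivity) hε0.le]
    calc θ n ^ s = (d n + 2 * κn n) ^ s / ε0 ^ s := h3
      _ ≤ (2 ^ s * (d n ^ s + (2 * κn n) ^ s)) / ε0 ^ s := by
          gcongr
          exact add_rpow_le (hd0 n) (by positivity) hs
      _ = (2:ℝ) ^ s / ε0 ^ s * (d n ^ s + (2 * κn n) ^ s) := by ring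
  -- sum the per-term bounds
  set Sd : ℝ := ∑ n ∈ F', d n ^ s with hSddef
  set Sg : ℝ := ∑ n ∈ F', (2 * κn n) ^ s with hSgdef
  have htotal : 1 ≤ (2:ℝ) ^ s / ε0 ^ s * (Sd + Sg) := by
    refine le_trans htree' ?_
    calc ∑ n ∈ F', Pw ρ (w n) ^ s
        ≤ ∑ n ∈ F', (2:ℝ) ^ s / ε0 ^ s * (d n ^ s + (2 * κn n) ^ s) :=
          Finset.sum_le_sum hterm
      _ = (2:ℝ) ^ s / ε0 ^ s * (Sd + Sg) := by
          rw [← Finset.mul_sum, hSddef, hSgdef, ← Finset.sum_add_distrib]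
  -- geometric bound for the error term
  have hgn : ∀ n : ℕ, ((2:ℝ)⁻¹ ^ n) ^ s = g ^ n := by
    intro n
    rw [← Real.rpow_natCast (2⁻¹:ℝ) n, ← Real.rpow_mul (by norm_num), mul_comm,
      Real.rpow_mul (by norm_num), Real.rpow_natCast]
  have hSgle : Sg ≤ creal := by
    have hterm2 : ∀ n : ℕ, (2 * κn n) ^ s = b * g ^ n := by
      intro n
      have h1 : 2 * κn n = 2 * κ * (2⁻¹:ℝ) ^ n := by rw [hκndef]; ring
      rw [h1, Real.mul_rpow (by positivity) (by positivity), hgn n, h2κ]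
    have hsum : ∑ n ∈ F', g ^ n ≤ Cs := by
      rw [hCsdef, ← tsum_geometric_of_lt_one hg0.le hg1]
      exact Summable.sum_le_tsum F' (fun n _ => by positivity)
        (summable_geometric_of_lt_one hg0.le hg1)
    have hbCs : b * Cs = creal := by
      rw [hbdef, hcrealdef]
      field_simp
    calc Sg = ∑ n ∈ F', b * g ^ n := Finset.sum_congr rfl fun n _ => hterm2 n
      _ = b * ∑ n ∈ F', g ^ n := by rw [Finset.mul_sum]
      _ ≤ b * Cs := mul_le_mul_of_nonneg_left hsum hb0.le
      _ = creal := hbCs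
  -- conclude the real inequality
  have htotal' : ε0 ^ s ≤ (2:ℝ) ^ s * (Sd + Sg) := by
    have h := mul_le_mul_of_nonneg_left htotal he0s.le
    rw [mul_one] at h
    calc ε0 ^ s ≤ ε0 ^ s * ((2:ℝ) ^ s / ε0 ^ s * (Sd + Sg)) := h
      _ = (2:ℝ) ^ s * (Sd + Sg) := by field_simp
  have hcr2 : (2:ℝ) ^ s * creal = ε0 ^ s / 2 := by
    rw [hcrealdef]
    field_simp
  have h6 : ε0 ^ s / 2 ≤ (2:ℝ) ^ s * Sd := by
    have hmul := mul_le_mul_of_nonneg_left hSgle h2s.le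
    nlinarith
  have h7 : creal ≤ Sd := by
    rw [hcrealdef, div_le_iff₀ (by positivity : (0:ℝ) < (2:ℝ) ^ s * 2)]
    nlinarith
  -- transfer to ENNReal
  calc ENNReal.ofReal creal ≤ ENNReal.ofReal Sd := ENNReal.ofReal_le_ofReal h7
    _ = ∑ n ∈ F', ENNReal.ofReal (d n ^ s) := by
        rw [hSddef]
        exact ENNReal.ofReal_sum_of_nonneg fun n _ => by positivity
    _ ≤ ∑ n ∈ F', ⨆ _ : (t n).Nonempty, EMetric.diam (t n) ^ s := by
        refine Finset.sum_le_sum ?_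
        intro n hn
        have htne : (t n).Nonempty := by
          by_contra hemp
          rw [Set.not_nonempty_iff_eq_empty] at hemp
          have hVe : V n = ∅ := by
            rw [hVdef]
            simp [hemp]
          obtain ⟨x, hx, _⟩ := (Finset.mem_filter.1 hn).2
          rw [hVe] at hx
          exact hx
        rw [iSup_pos htne]
        have hED : EMetric.diam (t n) = ENNReal.ofReal (d n) := by
          have hne : EMetric.diam (t n) ≠ ⊤ :=
            ne_top_of_le_ne_top ENNReal.one_ne_top (hdiamt n)
          rw [hddef]
          exact (ENNReal.ofReal_toReal hne).symm
        rw [hED, ENNReal.ofReal_rpow_of_nonneg (hd0 n) hs.le]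
    _ ≤ ∑' n, ⨆ _ : (t n).Nonempty, EMetric.diam (t n) ^ s := ENNReal.sum_le_tsum F'

/-! ### Affine images and Lebesgue measure on `ℝ` -/

lemma affine_image_eq (a c : ℝ) (ha : a ≠ 0) (S : Set ℝ) :
    (fun t => a * t + c) '' S = (fun y => a⁻¹ * (y - c)) ⁻¹' S := by
  ext y
  simp only [Set.mem_image, Set.mem_preimage]
  constructor
  · rintro ⟨t, ht, rfl⟩
    have : a⁻¹ * (a * t + c - c) = t := by field_simp; ring
    rwa [this]
  · intro h
    refine ⟨a⁻¹ * (y - c), h, ?_⟩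
    field_simp
    ring

lemma affine_image_measurable {a c : ℝ} (ha : a ≠ 0) {S : Set ℝ}
    (hS : MeasurableSet S) : MeasurableSet ((fun t => a * t + c) '' S) := by
  rw [affine_image_eq a c ha]
  exact ((measurable_id.sub_const c).const_mul a⁻¹) hS

lemma volume_affine_image {a : ℝ} (c : ℝ) (ha : 0 < a) (S : Set ℝ) :
    volume ((fun t => a * t + c) '' S) = ENNReal.ofReal a * volume S := by
  rw [affine_image_eq a c ha.ne']
  have hcomp : (fun y : ℝ => a⁻¹ * (y - c)) = (fun u => a⁻¹ * u) ∘ (fun y => y + (-c)) := by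
    funext y; simp [sub_eq_add_neg]
  rw [hcomp, Set.preimage_comp, measure_preimage_add_right volume (-c) _,
    Real.volume_preimage_mul_left (inv_ne_zero ha.ne') S]
  rw [inv_inv, abs_of_pos ha]

end PSSAux

open PSSAux

/-- (Peres–Schlag–Solomyak.) For a self-similar set `K ⊂ ℝᵈ` with strong
separation and `dim K = s`, if a linear projection of `μ = ℋ^s|_K` is absolutely
continuous with respect to `ℋ¹`, then it is in fact equivalent to `ℋ¹|_{π(K)}`: every
subset of `π(K)` of positive length has positive projected measure. -/
theorem projection_equivalent (d q : ℕ) (ρ : Fin q → ℝ)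
    (w : Fin q → EuclideanSpace ℝ (Fin d))
    (hρ : ∀ j, ρ j ∈ Set.Ioo (0:ℝ) 1)
    (ψ : Fin q → EuclideanSpace ℝ (Fin d) → EuclideanSpace ℝ (Fin d))
    (hψ : ∀ j x, ψ j x = ρ j • x + w j)
    (K : Set (EuclideanSpace ℝ (Fin d))) (hKc : IsCompact K) (hKne : K.Nonempty)
    (hinv : K = ⋃ j, ψ j '' K)
    (hsep : Pairwise fun i j => Disjoint (ψ i '' K) (ψ j '' K))
    (s : ℝ) (hs : 0 < s) (hdim : ∑ j, ρ j ^ s = 1)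
    (π : EuclideanSpace ℝ (Fin d) →L[ℝ] ℝ)
    (hA : (((μH[s]).restrict K).map π) ≪ volume) :
    ∀ A : Set ℝ, A ⊆ π '' K → MeasurableSet A → 0 < volume A →
      0 < (((μH[s]).restrict K).map π) A := by
  classical
  intro A hAsub hAmeas hApos
  by_contra h0
  set ν : Measure ℝ := ((μH[s]).restrict K).map π with hνdef
  have hν0 : ν A = 0 := le_antisymm (by simpa [hνdef] using not_lt.1 h0) zero_le
  -- basic facts
  have hρ0 : ∀ j, 0 < ρ j := fun j => (hρ j).1
  have hρ1 : ∀ j, ρ j < 1 := fun j => (hρ j).2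
  have hπm : Measurable (⇑π) := π.continuous.measurable
  have hKm : MeasurableSet K := hKc.isClosed.measurableSet
  have hsim : ∀ j x y, dist (ψ j x) (ψ j y) = ρ j * dist x y := by
    intro j x y
    rw [hψ, hψ, dist_eq_norm]
    have heq : (ρ j • x + w j) - (ρ j • y + w j) = ρ j • (x - y) := by
      rw [smul_sub]; abel
    rw [heq, norm_smul, Real.norm_eq_abs, abs_of_pos (hρ0 j), dist_eq_norm]
  have hinvs : ∀ j, ψ j '' K ⊆ K := fun j =>
    subset_trans (Set.subset_iUnion (fun i => ψ i '' K) j) hinv.symm.subset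
  -- positive Hausdorff measure
  have hKpos : 0 < μH[s] K := hausdorff_pos hρ hsim hKc hKne hinv hsep hs hdim
  -- maximal ratio
  have hq : 0 < q := by
    rcases Nat.eq_zero_or_pos q with h | h
    · subst h; simp at hdim
    · exact h
  haveI : Nonempty (Fin q) := Fin.pos_iff_nonempty.1 hq
  obtain ⟨R, hR, hR1, hR0⟩ : ∃ R : ℝ, (∀ j, ρ j ≤ R) ∧ R < 1 ∧ 0 < R := by
    refine ⟨Finset.univ.sup' Finset.univ_nonempty ρ,
      fun j => Finset.le_sup' ρ (Finset.mem_univ j), ?_, ?_⟩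
    · exact (Finset.sup'_lt_iff _).2 fun j _ => hρ1 j
    · obtain ⟨j⟩ := (inferInstance : Nonempty (Fin q))
      exact lt_of_lt_of_le (hρ0 j) (Finset.le_sup' ρ (Finset.mem_univ j))
  -- evaluating ν
  have hνap : ∀ S : Set ℝ, MeasurableSet S → ν S = μH[s] (⇑π ⁻¹' S ∩ K) := by
    intro S hS
    rw [hνdef, Measure.map_apply hπm hS, Measure.restrict_apply (hπm hS)]
  -- the induced affine maps on ℝ
  set φ : Fin q → ℝ → ℝ := fun j t => ρ j * t + π (w j) with hφdef
  have hπψ : ∀ j x, π (ψ j x) = φ j (π x) := by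
    intro j x
    rw [hψ, hφdef]
    simp [_root_.map_add, _root_.map_smul, smul_eq_mul]
  -- pulling back null sets
  have hkey : ∀ (j : Fin q) (S : Set ℝ), MeasurableSet S → ν S = 0 →
      ν (φ j ⁻¹' S) = 0 := by
    intro j S hS hNS
    have hφm : Measurable (φ j) := (measurable_id.const_mul (ρ j)).add_const _
    have hmS : MeasurableSet (φ j ⁻¹' S) := hφm hS
    rw [hνap _ hmS]
    rw [hνap S hS] at hNS
    have himg : ψ j '' (⇑π ⁻¹' (φ j ⁻¹' S) ∩ K) ⊆ ⇑π ⁻¹' S ∩ K := by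
      rintro _ ⟨x, ⟨hx1, hx2⟩, rfl⟩
      exact ⟨by rw [Set.mem_preimage, hπψ]; exact hx1, hinvs j ⟨x, hx2, rfl⟩⟩
    have hanti : AntilipschitzWith (Real.toNNReal (ρ j))⁻¹ (ψ j) := by
      refine AntilipschitzWith.of_le_mul_dist ?_
      intro x y
      rw [hsim]
      rw [NNReal.coe_inv, Real.coe_toNNReal _ (hρ0 j).le]
      rw [← mul_assoc, inv_mul_cancel₀ (hρ0 j).ne', one_mul]
    have h1 := hanti.le_hausdorffMeasure_image hs.le (⇑π ⁻¹' (φ j ⁻¹' S) ∩ K)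
    have h2 : μH[s] (ψ j '' (⇑π ⁻¹' (φ j ⁻¹' S) ∩ K)) = 0 :=
      le_antisymm (le_trans (measure_mono himg) (le_of_eq hNS)) zero_le
    rw [h2, mul_zero] at h1
    exact le_antisymm h1 zero_le
  -- the bad sets
  set B : ℕ → Set ℝ := fun n => Nat.rec A (fun _ Bn => Bn ∪ ⋃ j, φ j ⁻¹' Bn) n with hBdef
  have hBsucc : ∀ n, B (n+1) = B n ∪ ⋃ j, φ j ⁻¹' B n := fun n => rfl
  have hφm : ∀ j, Measurable (φ j) := fun j => (measurable_id.const_mul (ρ j)).add_const _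
  have hBm : ∀ n, MeasurableSet (B n) := by
    intro n
    induction n with
    | zero => exact hAmeas
    | succ n ih =>
        rw [hBsucc]
        exact ih.union (MeasurableSet.iUnion fun j => hφm j ih)
  have hB0 : ∀ n, ν (B n) = 0 := by
    intro n
    induction n with
    | zero => exact hν0
    | succ n ih =>
        rw [hBsucc]
        refine measure_union_null ih (measure_iUnion_null fun j => hkey j _ (hBm n) ih)
  set U : Set ℝ := ⋃ n, B n with hUdef
  have hUm : MeasurableSet U := MeasurableSet.iUnion hBm
  have hU0 : ν U = 0 := measure_iUnion_null hB0
  -- the good set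
  have hπKm : MeasurableSet (⇑π '' K) := (hKc.image π.continuous).isClosed.measurableSet
  set G : Set ℝ := ⇑π '' K \ U with hGdef
  have hGm : MeasurableSet G := hπKm.diff hUm
  have hνπK : ν (⇑π '' K) = μH[s] K := by
    rw [hνap _ hπKm]
    congr 1
    exact Set.inter_eq_self_of_subset_right (Set.subset_preimage_image _ _)
  have hνG : ν G = μH[s] K := by
    rw [hGdef, measure_diff_null hU0, hνπK]
  have hvolG : 0 < volume G := by
    by_contra hv
    have : volume G = 0 := le_antisymm (not_lt.1 hv) zero_le
    have := hA this
    rw [hνG] at this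
    exact hKpos.ne' this
  -- density point of G
  have hzae := (Besicovitch.ae_tendsto_measure_inter_div volume G).and
    (ae_restrict_mem hGm)
  have hrne : (volume.restrict G) ≠ 0 := by
    rw [Ne, Measure.restrict_eq_zero]
    exact hvolG.ne'
  haveI := MeasureTheory.ae_neBot.2 hrne
  obtain ⟨z, hztend, hzG⟩ := hzae.exists
  -- a scale at which G has density ≥ 3/4
  have hev : ∀ᶠ r' in nhdsWithin 0 (Set.Ioi 0), ENNReal.ofReal (3/4) <
      volume (G ∩ Metric.closedBall z r') / volume (Metric.closedBall z r') :=
    hztend.eventually (eventually_gt_nhds (ENNReal.ofReal_lt_one.2 (by norm_num : (3/4:ℝ) < 1)))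
  obtain ⟨δ, hδ34, hδ0⟩ := (hev.and eventually_mem_nhdsWithin).exists
  rw [Set.mem_Ioi] at hδ0
  have hzmass : ENNReal.ofReal (3/4 * (2 * δ)) ≤ volume (G ∩ Metric.closedBall z δ) := by
    have hvb : volume (Metric.closedBall z δ) = ENNReal.ofReal (2 * δ) :=
      Real.volume_closedBall z δ
    have h1 : ENNReal.ofReal (3/4) < volume (G ∩ Metric.closedBall z δ) /
        volume (Metric.closedBall z δ) := hδ34
    rw [ENNReal.lt_div_iff_mul_lt (Or.inl (by rw [hvb]; positivity))
      (Or.inl (by rw [hvb]; exact ENNReal.ofReal_ne_top))] at h1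
    rw [ENNReal.ofReal_mul (by norm_num), ← hvb]
    exact h1.le
  -- density point of y in A
  have hyae := (Besicovitch.ae_tendsto_measure_inter_div volume A).and
    (ae_restrict_mem hAmeas)
  have hrneA : (volume.restrict A) ≠ 0 := by
    rw [Ne, Measure.restrict_eq_zero]
    exact hApos.ne'
  haveI := MeasureTheory.ae_neBot.2 hrneA
  obtain ⟨y, hytend, hyA⟩ := hyae.exists
  obtain ⟨x, hxK, hπx⟩ := hAsub hyA
  -- geometry of the projected set
  set D' : ℝ := Metric.diam (⇑π '' K) with hD'def
  have hD'0 : 0 ≤ D' := Metric.diam_nonneg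
  have hπKbdd : Bornology.IsBounded (⇑π '' K) := (hKc.image π.continuous).isBounded
  have hzπK : z ∈ ⇑π '' K := hzG.1
  -- the coding words
  have hln : ∀ n : ℕ, ∃ l : List (Fin q), l ∈ Cut ρ (((n:ℝ)+1))⁻¹ ∧ x ∈ Ψw ψ l '' K :=
    fun n => exists_cut_mem hρ hinv hR hR0 hR1 (by positivity) hxK
  choose l hl1 hl2 using hln
  set a : ℕ → ℝ := fun n => Pw ρ (l n) with hadef
  have ha0 : ∀ n, 0 < a n := fun n => Pw_pos hρ0 _
  have haθ : ∀ n, a n ≤ ((n:ℝ)+1)⁻¹ := fun n => (hl1 n).1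
  set r : ℕ → ℝ := fun n => a n * (D' + δ) with hrdef
  have hrpos : ∀ n, 0 < r n := fun n => mul_pos (ha0 n) (by linarith)
  -- the shift constants
  set cs : List (Fin q) → ℝ := fun l => l.foldr (fun j c => ρ j * c + π (w j)) 0
    with hcsdef
  have hcs_nil : cs [] = 0 := rfl
  have hcs_cons : ∀ j t, cs (j :: t) = ρ j * cs t + π (w j) := fun j t => rfl
  have hπΨ : ∀ (t : List (Fin q)) (u : EuclideanSpace ℝ (Fin d)),
      π (Ψw ψ t u) = Pw ρ t * π u + cs t := by
    intro t
    induction t with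
    | nil => intro u; simp [hcs_nil]
    | cons j t ih =>
        intro u
        rw [Ψw_cons, Function.comp_apply, hπψ, ih, hφdef, hcs_cons, Pw_cons]
        ring
  -- escape: affine images of good points avoid A
  have hesc : ∀ (t : List (Fin q)) (ζ : ℝ) (n : ℕ),
      (Pw ρ t * ζ + cs t) ∈ B n → ζ ∈ B (n + t.length) := by
    intro t
    induction t with
    | nil => intro ζ n h; simpa [hcs_nil] using h
    | cons j t ih =>
        intro ζ n h
        have heq : Pw ρ (j :: t) * ζ + cs (j :: t) = φ j (Pw ρ t * ζ + cs t) := by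
          rw [Pw_cons, hcs_cons, hφdef]; ring
        rw [heq] at h
        have h1 : (Pw ρ t * ζ + cs t) ∈ B (n + 1) := by
          rw [hBsucc]
          exact Set.mem_union_right _ (Set.mem_iUnion.2 ⟨j, h⟩)
        have h2 := ih ζ (n + 1) h1
        have h3 : n + 1 + t.length = n + (j :: t).length := by
          rw [List.length_cons]; omega
        rwa [h3] at h2
  have hnotA : ∀ (t : List (Fin q)), ∀ ζ ∈ G, (Pw ρ t * ζ + cs t) ∉ A := by
    intro t ζ hζ hcon
    have h1 : (Pw ρ t * ζ + cs t) ∈ B 0 := hcon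
    have h2 := hesc t ζ 0 h1
    rw [Nat.zero_add] at h2
    exact hζ.2 (Set.mem_iUnion.2 ⟨t.length, h2⟩)
  -- the key density bound at y
  set β : ℝ := (2 * (D' + δ) - 3/2 * δ) / (2 * (D' + δ)) with hβdef
  have hβ1 : β < 1 := by
    rw [hβdef, div_lt_one (by linarith)]
    linarith
  have hbound : ∀ n : ℕ, volume (A ∩ Metric.closedBall y (r n)) /
      volume (Metric.closedBall y (r n)) ≤ ENNReal.ofReal β := by
    intro n
    obtain ⟨u, huK, hux⟩ := hl2 n
    have hyu : y = a n * π u + cs (l n) := by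
      rw [← hπx, ← hux, hπΨ, hadef]
    -- the affine image of the good ball
    set Img : Set ℝ := (fun t => a n * t + cs (l n)) '' (G ∩ Metric.closedBall z δ)
      with hImgdef
    have hImgm : MeasurableSet Img :=
      affine_image_measurable (ha0 n).ne' (hGm.inter measurableSet_closedBall)
    have hImgvol : ENNReal.ofReal (a n * (3/4 * (2 * δ))) ≤ volume Img := by
      rw [hImgdef, volume_affine_image _ (ha0 n) _]
      rw [ENNReal.ofReal_mul (ha0 n).le]
      exact mul_le_mul_of_nonneg_left hzmass zero_le
    have hImgsub : Img ⊆ Metric.closedBall y (r n) \ A := by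
      rintro _ ⟨ζ, ⟨hζG, hζB⟩, rfl⟩
      constructor
      · rw [Metric.mem_closedBall, Real.dist_eq, hyu]
        have h1 : a n * ζ + cs (l n) - (a n * π u + cs (l n)) = a n * (ζ - π u) := by ring
        rw [h1, abs_mul, abs_of_pos (ha0 n)]
        have h2 : |ζ - π u| ≤ δ + D' := by
          have h3 : dist ζ z ≤ δ := Metric.mem_closedBall.1 hζB
          have h4 : dist z (π u) ≤ D' :=
            Metric.dist_le_diam_of_mem hπKbdd hzπK ⟨u, huK, rfl⟩
          calc |ζ - π u| = dist ζ (π u) := (Real.dist_eq _ _).symm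
            _ ≤ dist ζ z + dist z (π u) := dist_triangle _ _ _
            _ ≤ δ + D' := by rw [Real.dist_eq] at h3 ⊢; linarith
        rw [hrdef]
        calc a n * |ζ - π u| ≤ a n * (δ + D') :=
              mul_le_mul_of_nonneg_left h2 (ha0 n).le
          _ = a n * (D' + δ) := by ring
      · exact hnotA (l n) ζ hζG
    -- splitting the ball
    have hdisj : Disjoint (A ∩ Metric.closedBall y (r n)) Img := by
      refine Set.disjoint_left.2 ?_
      intro t ht hI
      exact (hImgsub hI).2 ht.1
    have hsplit : volume (A ∩ Metric.closedBall y (r n)) + volume Img ≤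
        volume (Metric.closedBall y (r n)) := by
      rw [← measure_union hdisj hImgm]
      refine measure_mono (Set.union_subset Set.inter_subset_right
        (hImgsub.trans Set.diff_subset))
    have hvb : volume (Metric.closedBall y (r n)) = ENNReal.ofReal (2 * r n) :=
      Real.volume_closedBall y (r n)
    have hAle : volume (A ∩ Metric.closedBall y (r n)) ≤
        ENNReal.ofReal (2 * r n - a n * (3/4 * (2 * δ))) := by
      have h1 : volume (A ∩ Metric.closedBall y (r n)) ≤
          volume (Metric.closedBall y (r n)) - volume Img :=
        ENNReal.le_sub_of_add_le_right
          (ne_top_of_le_ne_top (by rw [hvb]; exact ENNReal.ofReal_ne_top)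
            (measure_mono (hImgsub.trans Set.diff_subset))) hsplit
      refine le_trans h1 ?_
      rw [hvb]
      refine le_trans (tsub_le_tsub le_rfl hImgvol) ?_
      rw [ENNReal.ofReal_sub _ (mul_nonneg (ha0 n).le (by positivity))]
    refine le_trans (ENNReal.div_le_div_right hAle _) ?_
    rw [hvb, ← ENNReal.ofReal_div_of_pos (by have := hrpos n; linarith)]
    refine ENNReal.ofReal_le_ofReal ?_
    have hr' : r n = a n * (D' + δ) := rfl
    rw [hβdef, hr']
    have hden1 : (0:ℝ) < 2 * (a n * (D' + δ)) := by nlinarith [ha0 n, hδ0, hD'0]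
    have hden2 : (0:ℝ) < 2 * (D' + δ) := by nlinarith [hδ0, hD'0]
    rw [div_le_div_iff₀ hden1 hden2]
    refine le_of_eq ?_
    ring
  -- the radii tend to zero
  have h0tend : Filter.Tendsto r Filter.atTop (nhds 0) := by
    have hub : ∀ n : ℕ, r n ≤ ((n:ℝ)+1)⁻¹ * (D' + δ) := fun n =>
      mul_le_mul_of_nonneg_right (haθ n) (by linarith)
    have htt : Filter.Tendsto (fun n : ℕ => ((n:ℝ)+1)⁻¹ * (D' + δ))
        Filter.atTop (nhds 0) := by
      have := tendsto_one_div_add_atTop_nhds_zero_nat.mul_const (D' + δ)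
      simpa [one_div] using this
    exact tendsto_of_tendsto_of_tendsto_of_le_of_le tendsto_const_nhds htt
      (fun n => (hrpos n).le) hub
  have hrtend : Filter.Tendsto r Filter.atTop (nhdsWithin 0 (Set.Ioi 0)) :=
    tendsto_nhdsWithin_of_tendsto_nhds_of_eventually_within r h0tend
      (Filter.Eventually.of_forall fun n => Set.mem_Ioi.2 (hrpos n))
  -- contradiction with the density point property at y
  have hcomp := hytend.comp hrtend
  have hfin := hcomp.eventually (eventually_gt_nhds (ENNReal.ofReal_lt_one.2 hβ1))
  obtain ⟨n, hn⟩ := hfin.exists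
  simp only [Function.comp_apply] at hn
  exact absurd (hbound n) (not_le.2 hn)
end
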